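/- (Completeness of EqFSCL for closed terms.) For all closed terms P, Q ∈ S_A, EqFSCL ⊢ P = Q if and only if se(P) = se(Q). -/
import Mathlib


/-- Evaluation trees over a set `A` of atoms, with leaves `T` and `F`. -/
inductive ETree (A : Type) : Type
  | leafT : ETree A
  | leafF : ETree A
  | node : ETree A → A → ETree A → ETree A

namespace ETree

/-- Leaf replacement `X[T↦Y, F↦Z]`. -/
def repl {A : Type} : ETree A → ETree A → ETree A → ETree A
  | leafT, y, _ => y
  | leafF, _, z => z
  | node l a r, y, z => node (repl l y z) a (repl r y z)

end ETree

/-- Closed sequential propositional statements over `A`: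
`P ::= a | T | F | ¬P | P ∧❛ P | P ∨❛ P`. -/
inductive STerm (A : Type) : Type
  | atom : A → STerm A
  | tt : STerm A
  | ff : STerm A
  | neg : STerm A → STerm A
  | and : STerm A → STerm A → STerm A
  | or : STerm A → STerm A → STerm A

/-- The short-circuit evaluation function `se : S_A → T_A`. -/
def se {A : Type} : STerm A → ETree A
  | .tt => .leafT
  | .ff => .leafF
  | .atom a => .node .leafT a .leafF
  | .neg P => (se P).repl .leafF .leafT
  | .and P Q => (se P).repl (se Q) .leafF
  | .or P Q => (se P).repl .leafT (se Q)

/-- Derivability from the axiom set EqFSCL: the least congruence (w.r.t. `¬`, `∧❛`, `∨❛`)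
on closed terms containing all closed substitution instances of the axioms (F1)-(F10). -/
inductive EqFSCL {A : Type} : STerm A → STerm A → Prop
  | refl (P) : EqFSCL P P
  | symm {P Q} : EqFSCL P Q → EqFSCL Q P
  | trans {P Q R} : EqFSCL P Q → EqFSCL Q R → EqFSCL P R
  | neg_congr {P Q} : EqFSCL P Q → EqFSCL (.neg P) (.neg Q)
  | and_congr {P P' Q Q'} : EqFSCL P Q → EqFSCL P' Q' → EqFSCL (.and P P') (.and Q Q')
  | or_congr {P P' Q Q'} : EqFSCL P Q → EqFSCL P' Q' → EqFSCL (.or P P') (.or Q Q')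
  | F1 : EqFSCL .ff (.neg .tt)
  | F2 (x y) : EqFSCL (.or x y) (.neg (.and (.neg x) (.neg y)))
  | F3 (x) : EqFSCL (.neg (.neg x)) x
  | F4 (x) : EqFSCL (.and .tt x) x
  | F5 (x) : EqFSCL (.or x .ff) x
  | F6 (x) : EqFSCL (.and .ff x) .ff
  | F7 (x y z) : EqFSCL (.and (.and x y) z) (.and x (.and y z))
  | F8 (x) : EqFSCL (.and (.neg x) .ff) (.and x .ff)
  | F9 (x y) : EqFSCL (.or (.and x .ff) y) (.and (.or x .tt) y)
  | F10 (x y z) : EqFSCL (.or (.and x y) (.and z .ff))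
      (.and (.or x (.and z .ff)) (.or y (.and z .ff)))

namespace FSCL

open ETree

variable {A : Type}

/-! ### Basic tree lemmas -/

@[simp] lemma repl_leafT (Y Z : ETree A) : (ETree.leafT).repl Y Z = Y := rfl
@[simp] lemma repl_leafF (Y Z : ETree A) : (ETree.leafF).repl Y Z = Z := rfl
@[simp] lemma repl_node (l : ETree A) (a : A) (r Y Z : ETree A) :
    (ETree.node l a r).repl Y Z = .node (l.repl Y Z) a (r.repl Y Z) := rfl

lemma repl_repl (X Y Z U V : ETree A) :
    (X.repl Y Z).repl U V = X.repl (Y.repl U V) (Z.repl U V) := by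
  induction X with
  | leafT => rfl
  | leafF => rfl
  | node l a r hl hr => simp [hl, hr]

@[simp] lemma repl_id (X : ETree A) : X.repl .leafT .leafF = X := by
  induction X with
  | leafT => rfl
  | leafF => rfl
  | node l a r hl hr => simp [hl, hr]

/-- `X[T↦Y]` -/
def tg (X Y : ETree A) : ETree A := X.repl Y .leafF
/-- `X[F↦Z]` -/
def fg (X Z : ETree A) : ETree A := X.repl .leafT Z
/-- flip all leaves -/
def fl (X : ETree A) : ETree A := X.repl .leafF .leafT

@[simp] lemma tg_leafT (Y : ETree A) : tg .leafT Y = Y := rfl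
@[simp] lemma tg_leafF (Y : ETree A) : tg .leafF Y = .leafF := rfl
@[simp] lemma tg_node (l : ETree A) (a : A) (r Y : ETree A) :
    tg (.node l a r) Y = .node (tg l Y) a (tg r Y) := rfl
@[simp] lemma fg_leafT (Y : ETree A) : fg .leafT Y = .leafT := rfl
@[simp] lemma fg_leafF (Y : ETree A) : fg .leafF Y = Y := rfl
@[simp] lemma fg_node (l : ETree A) (a : A) (r Y : ETree A) :
    fg (.node l a r) Y = .node (fg l Y) a (fg r Y) := rfl
@[simp] lemma fl_leafT : fl (.leafT : ETree A) = .leafF := rfl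
@[simp] lemma fl_leafF : fl (.leafF : ETree A) = .leafT := rfl
@[simp] lemma fl_node (l : ETree A) (a : A) (r : ETree A) :
    fl (.node l a r) = .node (fl l) a (fl r) := rfl

lemma tg_tg (X Y Z : ETree A) : tg (tg X Y) Z = tg X (tg Y Z) := by
  simp [tg, repl_repl]

lemma fg_fg (X Y Z : ETree A) : fg (fg X Y) Z = fg X (fg Y Z) := by
  simp [fg, repl_repl]

/-- `(X[F↦W])[T↦Y] = X[T↦Y, F↦W[T↦Y]]` -/
lemma tg_fg (X W Y : ETree A) : tg (fg X W) Y = X.repl Y (tg W Y) := by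
  simp [fg, tg, repl_repl]

/-- `(X[T↦W])[F↦Y] = X[T↦W[F↦Y], F↦Y]` -/
lemma fg_tg (X W Y : ETree A) : fg (tg X W) Y = X.repl (fg W Y) Y := by
  simp [fg, tg, repl_repl]

lemma tg_repl (X Y Z U : ETree A) : tg (X.repl Y Z) U = X.repl (tg Y U) (tg Z U) := by
  simp [tg, repl_repl]

lemma fg_repl (X Y Z U : ETree A) : fg (X.repl Y Z) U = X.repl (fg Y U) (fg Z U) := by
  simp [fg, repl_repl]

lemma fl_fl (X : ETree A) : fl (fl X) = X := by
  simp [fl, repl_repl]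

lemma fl_repl (X Y Z : ETree A) : fl (X.repl Y Z) = X.repl (fl Y) (fl Z) := by
  simp [fl, repl_repl]

lemma fl_tg (X Y : ETree A) : fl (tg X Y) = fg (fl X) (fl Y) := by
  simp [tg, fg, fl, repl_repl]

lemma fl_fg (X Y : ETree A) : fl (fg X Y) = tg (fl X) (fl Y) := by
  simp [tg, fg, fl, repl_repl]

/-! ### hasT / hasF / size -/

def hasT : ETree A → Prop
  | .leafT => True
  | .leafF => False
  | .node l _ r => hasT l ∨ hasT r

def hasF : ETree A → Prop
  | .leafT => False
  | .leafF => True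
  | .node l _ r => hasF l ∨ hasF r

@[simp] lemma hasT_leafT : hasT (.leafT : ETree A) := trivial
@[simp] lemma hasT_leafF : ¬ hasT (.leafF : ETree A) := fun h => h
@[simp] lemma hasT_node (l : ETree A) (a : A) (r : ETree A) :
    hasT (.node l a r) ↔ hasT l ∨ hasT r := Iff.rfl
@[simp] lemma hasF_leafF : hasF (.leafF : ETree A) := trivial
@[simp] lemma hasF_leafT : ¬ hasF (.leafT : ETree A) := fun h => h
@[simp] lemma hasF_node (l : ETree A) (a : A) (r : ETree A) :
    hasF (.node l a r) ↔ hasF l ∨ hasF r := Iff.rfl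

lemma hasT_or_hasF (X : ETree A) : hasT X ∨ hasF X := by
  induction X with
  | leafT => exact Or.inl trivial
  | leafF => exact Or.inr trivial
  | node l a r hl hr =>
      rcases hl with h | h
      · exact Or.inl (Or.inl h)
      · rcases hr with h' | h'
        · exact Or.inl (Or.inr h')
        · exact Or.inr (Or.inl h)

def pureT (X : ETree A) : Prop := ¬ hasF X
def pureF (X : ETree A) : Prop := ¬ hasT X

lemma pureT_leafT : pureT (.leafT : ETree A) := hasF_leafT
lemma pureF_leafF : pureF (.leafF : ETree A) := hasT_leafF

lemma pureT_node_iff {l : ETree A} {a : A} {r : ETree A} :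
    pureT (.node l a r) ↔ pureT l ∧ pureT r := by
  unfold pureT; simp [not_or]

lemma pureF_node_iff {l : ETree A} {a : A} {r : ETree A} :
    pureF (.node l a r) ↔ pureF l ∧ pureF r := by
  unfold pureF; simp [not_or]

lemma pureT_hasT {X : ETree A} (h : pureT X) : hasT X :=
  (hasT_or_hasF X).resolve_right h

lemma pureF_hasF {X : ETree A} (h : pureF X) : hasF X :=
  (hasT_or_hasF X).resolve_left h

lemma not_pureT_pureF {X : ETree A} (h : pureT X) (h' : pureF X) : False :=
  h' (pureT_hasT h)

/-- mixed -/
def mx (X : ETree A) : Prop := hasT X ∧ hasF X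

lemma mx_not_pureT {X : ETree A} (h : mx X) : ¬ pureT X := fun hp => hp h.2
lemma mx_not_pureF {X : ETree A} (h : mx X) : ¬ pureF X := fun hp => hp h.1

/-- trees with no T leaf are unchanged by [T↦·] -/
lemma tg_of_pureF {X : ETree A} (h : pureF X) (Y : ETree A) : tg X Y = X := by
  induction X with
  | leafT => exact absurd trivial h
  | leafF => rfl
  | node l a r hl hr =>
      rw [pureF, hasT_node, not_or] at h
      simp [hl h.1, hr h.2]

lemma fg_of_pureT {X : ETree A} (h : pureT X) (Y : ETree A) : fg X Y = X := by
  induction X with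
  | leafT => rfl
  | leafF => exact absurd trivial h
  | node l a r hl hr =>
      rw [pureT, hasF_node, not_or] at h
      simp [hl h.1, hr h.2]

lemma repl_of_pureT {X : ETree A} (h : pureT X) (Y Z : ETree A) : X.repl Y Z = tg X Y := by
  induction X with
  | leafT => rfl
  | leafF => exact absurd trivial h
  | node l a r hl hr =>
      rw [pureT, hasF_node, not_or] at h
      simp [hl h.1, hr h.2, tg]

lemma repl_of_pureF {X : ETree A} (h : pureF X) (Y Z : ETree A) : X.repl Y Z = fg X Z := by
  induction X with
  | leafT => exact absurd trivial h
  | leafF => rfl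
  | node l a r hl hr =>
      rw [pureF, hasT_node, not_or] at h
      simp [hl h.1, hr h.2, fg]

lemma hasT_tg {X Y : ETree A} (hX : hasT X) (hY : hasT Y) : hasT (tg X Y) := by
  induction X with
  | leafT => exact hY
  | leafF => exact absurd hX (by simp)
  | node l a r hl hr =>
      rcases hX with h | h
      · exact Or.inl (hl h)
      · exact Or.inr (hr h)

lemma hasF_tg_left {X : ETree A} (hX : hasF X) (Y : ETree A) : hasF (tg X Y) := by
  induction X with
  | leafT => exact absurd hX (by simp)
  | leafF => simp [tg]
  | node l a r hl hr =>
      rcases hX with h | h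
      · exact Or.inl (hl h)
      · exact Or.inr (hr h)

lemma hasF_tg_right {X Y : ETree A} (hX : hasT X) (hY : hasF Y) : hasF (tg X Y) := by
  induction X with
  | leafT => exact hY
  | leafF => exact absurd hX (by simp)
  | node l a r hl hr =>
      rcases hX with h | h
      · exact Or.inl (hl h)
      · exact Or.inr (hr h)

lemma hasT_fg_left {X : ETree A} (hX : hasT X) (Y : ETree A) : hasT (fg X Y) := by
  induction X with
  | leafT => simp [fg]
  | leafF => exact absurd hX (by simp)
  | node l a r hl hr =>
      rcases hX with h | h
      · exact Or.inl (hl h)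
      · exact Or.inr (hr h)

lemma hasT_fg_right {X Y : ETree A} (hX : hasF X) (hY : hasT Y) : hasT (fg X Y) := by
  induction X with
  | leafT => exact absurd hX (by simp)
  | leafF => exact hY
  | node l a r hl hr =>
      rcases hX with h | h
      · exact Or.inl (hl h)
      · exact Or.inr (hr h)

lemma hasF_fg {X Y : ETree A} (hX : hasF X) (hY : hasF Y) : hasF (fg X Y) := by
  induction X with
  | leafT => exact absurd hX (by simp)
  | leafF => exact hY
  | node l a r hl hr =>
      rcases hX with h | h
      · exact Or.inl (hl h)
      · exact Or.inr (hr h)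

lemma pureT_tg {X Y : ETree A} (hX : pureT X) (hY : pureT Y) : pureT (tg X Y) := by
  intro h
  induction X with
  | leafT => exact hY h
  | leafF => exact hX (by simp)
  | node l a r hl hr =>
      rw [pureT, hasF_node, not_or] at hX
      rcases h with h | h
      · exact hl hX.1 h
      · exact hr hX.2 h

lemma pureF_fg {X Y : ETree A} (hX : pureF X) (hY : pureF Y) : pureF (fg X Y) := by
  intro h
  induction X with
  | leafT => exact hX (by simp)
  | leafF => exact hY h
  | node l a r hl hr =>
      rw [pureF, hasT_node, not_or] at hX
      rcases h with h | h
      · exact hl hX.1 h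
      · exact hr hX.2 h

lemma pureF_tg {X Y : ETree A} (hY : pureF Y) : pureF (tg X Y) := by
  intro h
  induction X with
  | leafT => exact hY h
  | leafF => simp [tg] at h
  | node l a r hl hr => rcases h with h | h
                        · exact hl h
                        · exact hr h

lemma pureT_fg {X Y : ETree A} (hY : pureT Y) : pureT (fg X Y) := by
  intro h
  induction X with
  | leafT => simp [fg] at h
  | leafF => exact hY h
  | node l a r hl hr => rcases h with h | h
                        · exact hl h
                        · exact hr h

lemma mx_tg {X Y : ETree A} (hX : hasT X) (hY : mx Y) : mx (tg X Y) :=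
  ⟨hasT_tg hX hY.1, hasF_tg_right hX hY.2⟩

lemma mx_fg {X Y : ETree A} (hX : hasF X) (hY : mx Y) : mx (fg X Y) :=
  ⟨hasT_fg_right hX hY.1, hasF_fg hX hY.2⟩

/-- size -/
def sz : ETree A → ℕ
  | .leafT => 1
  | .leafF => 1
  | .node l _ r => sz l + sz r + 1

@[simp] lemma sz_leafT : sz (.leafT : ETree A) = 1 := rfl
@[simp] lemma sz_leafF : sz (.leafF : ETree A) = 1 := rfl
@[simp] lemma sz_node (l : ETree A) (a : A) (r : ETree A) :
    sz (.node l a r) = sz l + sz r + 1 := rfl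

lemma sz_pos (X : ETree A) : 1 ≤ sz X := by
  induction X with
  | leafT => simp
  | leafF => simp
  | node l a r hl hr => simp only [sz_node]; omega

lemma sz_tg_le (X Y : ETree A) : sz X ≤ sz (tg X Y) := by
  induction X with
  | leafT => exact sz_pos Y
  | leafF => simp
  | node l a r hl hr => simp only [tg_node, sz_node]; omega

lemma sz_fg_le (X Y : ETree A) : sz X ≤ sz (fg X Y) := by
  induction X with
  | leafT => simp
  | leafF => exact sz_pos Y
  | node l a r hl hr => simp only [fg_node, sz_node]; omega

lemma sz_tg_ge {X : ETree A} (hX : hasT X) (Y : ETree A) : sz Y ≤ sz (tg X Y) := by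
  induction X with
  | leafT => simp [tg]
  | leafF => exact absurd hX (by simp)
  | node l a r hl hr =>
      rcases hX with h | h
      · have := hl h; simp only [tg_node, sz_node]; omega
      · have := hr h; simp only [tg_node, sz_node]; omega

lemma sz_tg_gt {X : ETree A} (hX : hasT X) {l : ETree A} {a : A} {r : ETree A}
    (hnode : X = .node l a r) (Y : ETree A) : sz Y < sz (tg X Y) := by
  subst hnode
  rcases hX with h | h
  · have := sz_tg_ge h Y; have := sz_pos (tg r Y); simp only [tg_node, sz_node]; omega
  · have := sz_tg_ge h Y; have := sz_pos (tg l Y); simp only [tg_node, sz_node]; omega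

lemma sz_fg_ge {X : ETree A} (hX : hasF X) (Y : ETree A) : sz Y ≤ sz (fg X Y) := by
  induction X with
  | leafT => exact absurd hX (by simp)
  | leafF => simp [fg]
  | node l a r hl hr =>
      rcases hX with h | h
      · have := hl h; simp only [fg_node, sz_node]; omega
      · have := hr h; simp only [fg_node, sz_node]; omega

lemma sz_fg_gt {X : ETree A} (hX : hasF X) {l : ETree A} {a : A} {r : ETree A}
    (hnode : X = .node l a r) (Y : ETree A) : sz Y < sz (fg X Y) := by
  subst hnode
  rcases hX with h | h
  · have := sz_fg_ge h Y; have := sz_pos (fg r Y); simp only [fg_node, sz_node]; omega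
  · have := sz_fg_ge h Y; have := sz_pos (fg l Y); simp only [fg_node, sz_node]; omega

/-- strict growth of tg in first argument when graft is bigger than a leaf -/
lemma sz_tg_gt' {X Y : ETree A} (hX : hasT X) (hY : 2 ≤ sz Y) : sz X < sz (tg X Y) := by
  induction X with
  | leafT => simpa [tg]
  | leafF => exact absurd hX (by simp)
  | node l a r hl hr =>
      have l1 := sz_tg_le l Y
      have r1 := sz_tg_le r Y
      rcases hX with h | h
      · have := hl h; simp only [tg_node, sz_node]; omega
      · have := hr h; simp only [tg_node, sz_node]; omega

lemma sz_fg_gt' {X Y : ETree A} (hX : hasF X) (hY : 2 ≤ sz Y) : sz X < sz (fg X Y) := by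
  induction X with
  | leafT => exact absurd hX (by simp)
  | leafF => simpa [fg]
  | node l a r hl hr =>
      have l1 := sz_fg_le l Y
      have r1 := sz_fg_le r Y
      rcases hX with h | h
      · have := hl h; simp only [fg_node, sz_node]; omega
      · have := hr h; simp only [fg_node, sz_node]; omega

end FSCL

namespace FSCL

open ETree STerm

variable {A : Type}

@[simp] lemma se_tt : se (.tt : STerm A) = .leafT := rfl
@[simp] lemma se_ff : se (.ff : STerm A) = .leafF := rfl
@[simp] lemma se_atom (a : A) : se (.atom a) = .node .leafT a .leafF := rfl
lemma se_neg (P : STerm A) : se (.neg P) = fl (se P) := rfl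
lemma se_and (P Q : STerm A) : se (.and P Q) = tg (se P) (se Q) := rfl
lemma se_or (P Q : STerm A) : se (.or P Q) = fg (se P) (se Q) := rfl

/-- Soundness of EqFSCL w.r.t. `se`. -/
theorem se_sound {P Q : STerm A} (h : EqFSCL P Q) : se P = se Q := by
  induction h with
  | refl P => rfl
  | symm _ ih => exact ih.symm
  | trans _ _ ih1 ih2 => exact ih1.trans ih2
  | neg_congr _ ih => simp [se_neg, ih]
  | and_congr _ _ ih1 ih2 => simp [se_and, ih1, ih2]
  | or_congr _ _ ih1 ih2 => simp [se_or, ih1, ih2]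
  | F1 => rfl
  | F2 x y => simp [se_or, se_and, se_neg, fl, tg, fg, repl_repl]
  | F3 x => simp [se_neg, fl, repl_repl]
  | F4 x => simp [se_and, tg]
  | F5 x => simp [se_or, fg]
  | F6 x => simp [se_and, tg]
  | F7 x y z => simp [se_and, tg, repl_repl]
  | F8 x => simp [se_and, se_neg, fl, tg, repl_repl]
  | F9 x y => simp [se_or, se_and, tg, fg, repl_repl]
  | F10 x y z => simp [se_or, se_and, tg, fg, repl_repl]

end FSCL

namespace FSCL

open ETree

variable {A : Type}

@[simp] lemma tg_leafT_id (X : ETree A) : tg X .leafT = X := repl_id X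
@[simp] lemma fg_leafF_id (X : ETree A) : fg X .leafF = X := repl_id X

lemma hasT_fl {X : ETree A} : hasT (fl X) ↔ hasF X := by
  induction X with
  | leafT => simp
  | leafF => simp
  | node l a r hl hr => simp only [fl_node, hasT_node, hasF_node, hl, hr]

lemma hasF_fl {X : ETree A} : hasF (fl X) ↔ hasT X := by
  induction X with
  | leafT => simp
  | leafF => simp
  | node l a r hl hr => simp only [fl_node, hasT_node, hasF_node, hl, hr]

lemma mx_fl {X : ETree A} (h : mx X) : mx (fl X) :=
  ⟨hasT_fl.2 h.2, hasF_fl.2 h.1⟩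

lemma pureT_fl {X : ETree A} (h : pureF X) : pureT (fl X) := fun hf => h (hasF_fl.1 hf)
lemma pureF_fl {X : ETree A} (h : pureT X) : pureF (fl X) := fun ht => h (hasT_fl.1 ht)

lemma fl_inj {X Y : ETree A} (h : fl X = fl Y) : X = Y := by
  have := congrArg fl h; rwa [fl_fl, fl_fl] at this

@[simp] lemma sz_fl (X : ETree A) : sz (fl X) = sz X := by
  induction X with
  | leafT => rfl
  | leafF => rfl
  | node l a r hl hr => simp only [fl_node, sz_node, hl, hr]

/-- cancel graft value on the right -/
lemma tg_cancel_right {X Y Y' : ETree A} (hX : hasT X) (h : tg X Y = tg X Y') : Y = Y' := by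
  induction X with
  | leafT => exact h
  | leafF => exact absurd hX (by simp)
  | node l a r hl hr =>
      simp only [tg_node, ETree.node.injEq] at h
      rcases hX with hx | hx
      · exact hl hx h.1
      · exact hr hx h.2.2

lemma fg_cancel_right {X Y Y' : ETree A} (hX : hasF X) (h : fg X Y = fg X Y') : Y = Y' := by
  induction X with
  | leafT => exact absurd hX (by simp)
  | leafF => exact h
  | node l a r hl hr =>
      simp only [fg_node, ETree.node.injEq] at h
      rcases hX with hx | hx
      · exact hl hx h.1
      · exact hr hx h.2.2

/-- cancel pureT head on the left -/
lemma tg_cancel_left_pure {S S' Y : ETree A} (hS : pureT S) (hS' : pureT S')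
    (h : tg S Y = tg S' Y) : S = S' := by
  induction S generalizing S' with
  | leafF => exact absurd (by simp) hS
  | leafT =>
      cases S' with
      | leafT => rfl
      | leafF => exact absurd (by simp) hS'
      | node l' a' r' =>
          exfalso
          have : sz Y < sz (tg (ETree.node l' a' r') Y) :=
            sz_tg_gt (pureT_hasT hS') rfl Y
          rw [← h] at this
          simp only [tg_leafT] at this
          omega
  | node l a r hl hr =>
      cases S' with
      | leafT =>
          exfalso
          have : sz Y < sz (tg (ETree.node l a r) Y) := sz_tg_gt (pureT_hasT hS) rfl Y
          rw [h] at this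
          simp only [tg_leafT] at this
          omega
      | leafF => exact absurd (by simp) hS'
      | node l' a' r' =>
          rw [pureT_node_iff] at hS hS'
          simp only [tg_node, ETree.node.injEq] at h
          obtain ⟨h1, h2, h3⟩ := h
          rw [hl hS.1 hS'.1 h1, hr hS.2 hS'.2 h3, h2]

lemma fg_cancel_left_pure {U U' Y : ETree A} (hU : pureF U) (hU' : pureF U')
    (h : fg U Y = fg U' Y) : U = U' := by
  induction U generalizing U' with
  | leafT => exact absurd (by simp) hU
  | leafF =>
      cases U' with
      | leafF => rfl
      | leafT => exact absurd (by simp) hU'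
      | node l' a' r' =>
          exfalso
          have : sz Y < sz (fg (ETree.node l' a' r') Y) :=
            sz_fg_gt (pureF_hasF hU') rfl Y
          rw [← h] at this
          simp only [fg_leafF] at this
          omega
  | node l a r hl hr =>
      cases U' with
      | leafF =>
          exfalso
          have : sz Y < sz (fg (ETree.node l a r) Y) := sz_fg_gt (pureF_hasF hU) rfl Y
          rw [h] at this
          simp only [fg_leafF] at this
          omega
      | leafT => exact absurd (by simp) hU'
      | node l' a' r' =>
          rw [pureF_node_iff] at hU hU'
          simp only [fg_node, ETree.node.injEq] at h
          obtain ⟨h1, h2, h3⟩ := h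
          rw [hl hU.1 hU'.1 h1, hr hU.2 hU'.2 h3, h2]

/-- cancel graft heads generally (graft mixed) -/
lemma tg_cancel_left {X X' Y : ETree A} (hY : mx Y) (h : tg X Y = tg X' Y) : X = X' := by
  induction X generalizing X' with
  | leafT =>
      cases X' with
      | leafT => rfl
      | leafF => exact absurd (h.symm ▸ hY.1 : hasT (tg (ETree.leafF) Y)) (by simp [tg])
      | node l' a' r' =>
          exfalso
          by_cases ht : hasT (ETree.node l' a' r')
          · have : sz Y < sz (tg (ETree.node l' a' r') Y) := sz_tg_gt ht rfl Y
            rw [← h] at this; simp only [tg_leafT] at this; omega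
          · rw [tg_of_pureF ht] at h
            exact ht (h ▸ hY.1)
  | leafF =>
      cases X' with
      | leafF => rfl
      | leafT => exact absurd (h ▸ hY.1 : hasT (tg (ETree.leafF) Y)) (by simp [tg])
      | node l' a' r' => simp only [tg_leafF, tg_node] at h; exact absurd h (by simp)
  | node l a r hl hr =>
      cases X' with
      | leafT =>
          exfalso
          by_cases ht : hasT (ETree.node l a r)
          · have : sz Y < sz (tg (ETree.node l a r) Y) := sz_tg_gt ht rfl Y
            rw [h] at this; simp only [tg_leafT] at this; omega
          · rw [tg_of_pureF ht] at h
            exact ht (h.symm ▸ hY.1)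
      | leafF => simp only [tg_leafF, tg_node] at h; exact absurd h (by simp)
      | node l' a' r' =>
          simp only [tg_node, ETree.node.injEq] at h
          rw [hl h.1, hr h.2.2, h.2.1]

lemma fg_cancel_left {X X' Y : ETree A} (hY : mx Y) (h : fg X Y = fg X' Y) : X = X' := by
  have h' : tg (fl X) (fl Y) = tg (fl X') (fl Y) := by
    rw [← fl_fg, ← fl_fg, h]
  exact fl_inj (tg_cancel_left (mx_fl hY) h')

end FSCL

namespace FSCL

open ETree

variable {A : Type}

/-- Alignment of two pureT-graft decompositions. -/
lemma pt_align {S S' Y Y' : ETree A} (hS : pureT S) (hS' : pureT S')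
    (hY : mx Y) (hY' : mx Y') (h : tg S Y = tg S' Y') :
    (∃ S3, pureT S3 ∧ S' = tg S S3 ∧ Y = tg S3 Y') ∨
    (∃ S3, pureT S3 ∧ S = tg S' S3 ∧ Y' = tg S3 Y) := by
  induction S generalizing S' with
  | leafF => exact absurd (by simp) hS
  | leafT =>
      exact Or.inl ⟨S', hS', by simp, by simpa using h⟩
  | node l a r hl hr =>
      cases S' with
      | leafF => exact absurd (by simp) hS'
      | leafT =>
          exact Or.inr ⟨.node l a r, hS, by simp, by simpa using h.symm⟩
      | node l' a' r' =>
          rw [pureT_node_iff] at hS hS'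
          simp only [tg_node, ETree.node.injEq] at h
          obtain ⟨h1, h2, h3⟩ := h
          subst h2
          rcases hl hS.1 hS'.1 h1 with ⟨Sa, hSa, ea1, ea2⟩ | ⟨Sa, hSa, ea1, ea2⟩ <;>
            rcases hr hS.2 hS'.2 h3 with ⟨Sb, hSb, eb1, eb2⟩ | ⟨Sb, hSb, eb1, eb2⟩
          · -- both left
            have : Sa = Sb := tg_cancel_left_pure hSa hSb (ea2.symm.trans eb2)
            subst this
            exact Or.inl ⟨Sa, hSa, by simp only [tg_node, ea1, eb1], ea2⟩
          · -- left, right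
            have hcomp : Y = tg (tg Sa Sb) Y := by
              rw [tg_tg, ← eb2, ← ea2]
            rcases hab : tg Sa Sb with _ | _ | ⟨cl, ca, cr⟩
            · -- tg Sa Sb = leafT : then Sa = leafT and Sb = leafT
              have hSaT : Sa = .leafT := by
                cases Sa with
                | leafT => rfl
                | leafF => exact absurd (by simp) hSa
                | node u v w => simp [tg] at hab
              subst hSaT
              simp only [tg_leafT] at hab
              subst hab
              simp only [tg_leafT] at ea2
              simp only [tg_leafT_id] at ea1 eb1
              exact Or.inl ⟨.leafT, pureT_leafT, by simp [ea1, ← eb1], by simpa using ea2⟩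
            · exact absurd hab (fun hh => (pureT_tg hSa hSb) (hh ▸ (by simp)))
            · exfalso
              have : sz Y < sz (tg (tg Sa Sb) Y) := by
                refine sz_tg_gt (pureT_hasT (pureT_tg hSa hSb)) hab Y
              rw [← hcomp] at this
              omega
          · -- right, left : symmetric
            have hcomp : Y' = tg (tg Sa Sb) Y' := by
              rw [tg_tg, ← eb2, ← ea2]
            rcases hab : tg Sa Sb with _ | _ | ⟨cl, ca, cr⟩
            · have hSaT : Sa = .leafT := by
                cases Sa with
                | leafT => rfl
                | leafF => exact absurd (by simp) hSa
                | node u v w => simp [tg] at hab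
              subst hSaT
              simp only [tg_leafT] at hab
              subst hab
              simp only [tg_leafT] at ea2
              simp only [tg_leafT_id] at ea1 eb1
              exact Or.inl ⟨.leafT, pureT_leafT, by simp [← ea1, eb1], by simpa using ea2.symm⟩
            · exact absurd hab (fun hh => (pureT_tg hSa hSb) (hh ▸ (by simp)))
            · exfalso
              have : sz Y' < sz (tg (tg Sa Sb) Y') := by
                refine sz_tg_gt (pureT_hasT (pureT_tg hSa hSb)) hab Y'
              rw [← hcomp] at this
              omega
          · -- both right
            have : Sa = Sb := tg_cancel_left_pure hSa hSb (ea2.symm.trans eb2)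
            subst this
            exact Or.inr ⟨Sa, hSa, by simp only [tg_node, ea1, eb1], ea2⟩

/-- Dual alignment for pureF-grafts. -/
lemma pf_align {U U' Y Y' : ETree A} (hU : pureF U) (hU' : pureF U')
    (hY : mx Y) (hY' : mx Y') (h : fg U Y = fg U' Y') :
    (∃ U3, pureF U3 ∧ U' = fg U U3 ∧ Y = fg U3 Y') ∨
    (∃ U3, pureF U3 ∧ U = fg U' U3 ∧ Y' = fg U3 Y) := by
  have h' : tg (fl U) (fl Y) = tg (fl U') (fl Y') := by rw [← fl_fg, ← fl_fg, h]
  rcases pt_align (pureT_fl hU) (pureT_fl hU') (mx_fl hY) (mx_fl hY') h' with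
    ⟨S3, hS3, e1, e2⟩ | ⟨S3, hS3, e1, e2⟩
  · refine Or.inl ⟨fl S3, pureF_fl hS3, ?_, ?_⟩
    · apply fl_inj; rw [fl_fg, fl_fl]; exact e1
    · apply fl_inj; rw [fl_fg, fl_fl]; exact e2
  · refine Or.inr ⟨fl S3, pureF_fl hS3, ?_, ?_⟩
    · apply fl_inj; rw [fl_fg, fl_fl]; exact e1
    · apply fl_inj; rw [fl_fg, fl_fl]; exact e2

end FSCL

namespace FSCL

open ETree

variable {A : Type}

private lemma aux_fgtg {S2 U2 : ETree A} (hS2 : pureT S2) (h : U2 = tg S2 .leafF) :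
    S2 = fg U2 .leafT := by
  subst h
  rw [fg_tg]
  rw [repl_of_pureT hS2]
  simp

/-- A pureF-graft equal to a pureT-graft: one refines the other. -/
lemma tfc {U S W Y : ETree A} (hU : pureF U) (hS : pureT S)
    (h : fg U W = tg S Y) :
    (∃ SW, pureT SW ∧ W = tg SW Y ∧ S = fg U SW) ∨
    (∃ UY, pureF UY ∧ Y = fg UY W ∧ U = tg S UY) := by
  induction U generalizing S with
  | leafT => exact absurd (by simp) hU
  | leafF =>
      exact Or.inl ⟨S, hS, by simpa using h, by simp⟩
  | node l a r hl hr =>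
      cases S with
      | leafF => exact absurd (by simp) hS
      | leafT =>
          exact Or.inr ⟨.node l a r, hU, by simpa using h.symm, by simp⟩
      | node l' a' r' =>
          rw [pureF_node_iff] at hU
          rw [pureT_node_iff] at hS
          simp only [fg_node, tg_node, ETree.node.injEq] at h
          obtain ⟨h1, h2, h3⟩ := h
          subst h2
          rcases hl hU.1 hS.1 h1 with ⟨Sa, hSa, ea1, ea2⟩ | ⟨Ua, hUa, ea1, ea2⟩ <;>
            rcases hr hU.2 hS.2 h3 with ⟨Sb, hSb, eb1, eb2⟩ | ⟨Ub, hUb, eb1, eb2⟩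
          · -- both left
            have : Sa = Sb := tg_cancel_left_pure hSa hSb (ea1.symm.trans eb1)
            subst this
            exact Or.inl ⟨Sa, hSa, ea1, by simp only [fg_node, ea2, eb2]⟩
          · -- left, right: Sa : W = tg Sa Y, l' = fg l Sa ; Ub : Y = fg Ub W, r = tg r' Ub
            cases Sa with
            | leafF => exact absurd (by simp) hSa
            | leafT =>
                simp only [tg_leafT] at ea1
                subst ea1
                cases Ub with
                | leafT => exact absurd (by simp) hUb
                | leafF =>
                    simp only [fg_leafF] at eb1
                    refine Or.inl ⟨.leafT, pureT_leafT, by simp, ?_⟩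
                    simp only [fg_node]
                    have h2' : r' = fg r .leafT := aux_fgtg hS.2 eb2
                    rw [← ea2, ← h2']
                | node u v w =>
                    exfalso
                    have : sz W < sz (fg (ETree.node u v w) W) :=
                      sz_fg_gt (pureF_hasF hUb) rfl W
                    rw [← eb1] at this
                    omega
            | node u v w =>
                exfalso
                have hWY : sz Y < sz W := by
                  have := sz_tg_gt (pureT_hasT hSa) rfl Y
                  rw [← ea1] at this; exact this
                cases Ub with
                | leafT => exact absurd (by simp) hUb
                | leafF =>
                    simp only [fg_leafF] at eb1
                    rw [eb1] at hWY; omega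
                | node u' v' w' =>
                    have : sz W < sz Y := by
                      have := sz_fg_gt (pureF_hasF hUb) rfl W
                      rw [← eb1] at this; exact this
                    omega
          · -- right, left (mirror)
            cases Sb with
            | leafF => exact absurd (by simp) hSb
            | leafT =>
                simp only [tg_leafT] at eb1
                subst eb1
                cases Ua with
                | leafT => exact absurd (by simp) hUa
                | leafF =>
                    simp only [fg_leafF] at ea1
                    refine Or.inl ⟨.leafT, pureT_leafT, by simp, ?_⟩
                    simp only [fg_node]
                    have h2' : l' = fg l .leafT := aux_fgtg hS.1 ea2
                    rw [← eb2, ← h2']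
                | node u v w =>
                    exfalso
                    have : sz W < sz (fg (ETree.node u v w) W) :=
                      sz_fg_gt (pureF_hasF hUa) rfl W
                    rw [← ea1] at this
                    omega
            | node u v w =>
                exfalso
                have hWY : sz Y < sz W := by
                  have := sz_tg_gt (pureT_hasT hSb) rfl Y
                  rw [← eb1] at this; exact this
                cases Ua with
                | leafT => exact absurd (by simp) hUa
                | leafF =>
                    simp only [fg_leafF] at ea1
                    rw [ea1] at hWY; omega
                | node u' v' w' =>
                    have : sz W < sz Y := by
                      have := sz_fg_gt (pureF_hasF hUa) rfl W
                      rw [← ea1] at this; exact this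
                    omega
          · -- both right
            have : Ua = Ub := fg_cancel_left_pure hUa hUb (ea1.symm.trans eb1)
            subst this
            exact Or.inr ⟨Ua, hUa, ea1, by simp only [tg_node, ea2, eb2]⟩

end FSCL

namespace FSCL

open ETree

variable {A : Type}

/-! ### Star trees -/

inductive LTree : ETree A → Prop
  | mkT {S U : ETree A} (a : A) : pureT S → pureF U → LTree (.node S a U)
  | mkF {S U : ETree A} (a : A) : pureF U → pureT S → LTree (.node U a S)

inductive StarT : ETree A → Prop
  | lit {X} : LTree X → StarT X
  | land {X Y} : StarT X → StarT Y → StarT (tg X Y)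
  | lor {X Y} : StarT X → StarT Y → StarT (fg X Y)

lemma LTree.mx {X : ETree A} (h : LTree X) : FSCL.mx X := by
  cases h with
  | mkT a hS hU => exact ⟨Or.inl (pureT_hasT hS), Or.inr (pureF_hasF hU)⟩
  | mkF a hU hS => exact ⟨Or.inr (pureT_hasT hS), Or.inl (pureF_hasF hU)⟩

lemma StarT.mx {X : ETree A} (h : StarT X) : FSCL.mx X := by
  induction h with
  | lit hL => exact hL.mx
  | land hX hY ihX ihY => exact mx_tg ihX.1 ihY
  | lor hX hY ihX ihY => exact mx_fg ihX.2 ihY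

lemma LTree.isNode {X : ETree A} (h : LTree X) : ∃ l a r, X = .node l a r := by
  cases h with
  | mkT a hS hU => exact ⟨_, _, _, rfl⟩
  | mkF a hU hS => exact ⟨_, _, _, rfl⟩

lemma StarT.isNode {X : ETree A} (h : StarT X) : ∃ l a r, X = .node l a r := by
  induction h with
  | lit hL => exact hL.isNode
  | land hX hY ihX ihY =>
      obtain ⟨l, a, r, rfl⟩ := ihX
      exact ⟨_, _, _, rfl⟩
  | lor hX hY ihX ihY =>
      obtain ⟨l, a, r, rfl⟩ := ihX
      exact ⟨_, _, _, rfl⟩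

lemma StarT.ne_leafT {X : ETree A} (h : StarT X) : X ≠ .leafT := by
  obtain ⟨l, a, r, rfl⟩ := h.isNode; simp

lemma StarT.ne_leafF {X : ETree A} (h : StarT X) : X ≠ .leafF := by
  obtain ⟨l, a, r, rfl⟩ := h.isNode; simp

lemma StarT.sz3 {X : ETree A} (h : StarT X) : 3 ≤ sz X := by
  obtain ⟨l, a, r, rfl⟩ := h.isNode
  have := sz_pos l; have := sz_pos r
  simp only [sz_node]; omega

lemma LTree.fl {X : ETree A} (h : LTree X) : LTree (FSCL.fl X) := by
  cases h with
  | mkT a hS hU => exact LTree.mkF a (pureF_fl hS) (pureT_fl hU)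
  | mkF a hU hS => exact LTree.mkT a (pureT_fl hU) (pureF_fl hS)

lemma StarT.fl {X : ETree A} (h : StarT X) : StarT (FSCL.fl X) := by
  induction h with
  | lit hL => exact .lit hL.fl
  | land hX hY ihX ihY => rw [fl_tg]; exact .lor ihX ihY
  | lor hX hY ihX ihY => rw [fl_fg]; exact .land ihX ihY

/-! ### Linked slot pairs -/

inductive Pair : ETree A → ETree A → Prop
  | base : Pair .leafT .leafF
  | stepT {P Q Y} : Pair P Q → StarT Y → Pair (tg P Y) (tg Q Y)
  | stepF {P Q Y} : Pair P Q → StarT Y → Pair (fg P Y) (fg Q Y)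

lemma Pair.fst {P Q : ETree A} (h : Pair P Q) : P = .leafT ∨ StarT P := by
  induction h with
  | base => exact Or.inl rfl
  | stepT hPQ hY ih =>
      rcases ih with rfl | hP
      · exact Or.inr (by simpa using hY)
      · exact Or.inr (.land hP hY)
  | stepF hPQ hY ih =>
      rcases ih with rfl | hP
      · exact Or.inl (by simp [fg])
      · exact Or.inr (.lor hP hY)

lemma Pair.snd {P Q : ETree A} (h : Pair P Q) : Q = .leafF ∨ StarT Q := by
  induction h with
  | base => exact Or.inl rfl
  | stepT hPQ hY ih =>
      rcases ih with rfl | hQ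
      · exact Or.inl (by simp [tg])
      · exact Or.inr (.land hQ hY)
  | stepF hPQ hY ih =>
      rcases ih with rfl | hQ
      · exact Or.inr (by simpa using hY)
      · exact Or.inr (.lor hQ hY)

lemma Pair.ne {P Q : ETree A} (h : Pair P Q) : P ≠ Q := by
  induction h with
  | base => simp
  | stepT hPQ hY ih => exact fun hc => ih (tg_cancel_left hY.mx hc)
  | stepF hPQ hY ih => exact fun hc => ih (fg_cancel_left hY.mx hc)

lemma Pair.fl {P Q : ETree A} (h : Pair P Q) : Pair (FSCL.fl Q) (FSCL.fl P) := by
  induction h with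
  | base => exact .base
  | stepT hPQ hY ih => rw [fl_tg, fl_tg]; exact .stepF ih hY.fl
  | stepF hPQ hY ih => rw [fl_fg, fl_fg]; exact .stepT ih hY.fl

/-! ### Head-normal decomposition -/

lemma hn {X : ETree A} (h : StarT X) :
    ∃ L P Q, LTree L ∧ Pair P Q ∧ X = L.repl P Q := by
  induction h with
  | lit hL => exact ⟨_, _, _, hL, .base, (repl_id _).symm⟩
  | @land X Y hX hY ihX ihY =>
      obtain ⟨L, P, Q, hL, hPQ, rfl⟩ := ihX
      exact ⟨L, tg P Y, tg Q Y, hL, .stepT hPQ hY, by simp [tg, repl_repl]⟩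
  | @lor X Y hX hY ihX ihY =>
      obtain ⟨L, P, Q, hL, hPQ, rfl⟩ := ihX
      exact ⟨L, fg P Y, fg Q Y, hL, .stepF hPQ hY, by simp [fg, repl_repl]⟩

lemma repl_mkT {S U : ETree A} (hS : pureT S) (hU : pureF U) (a : A) (P Q : ETree A) :
    (ETree.node S a U).repl P Q = .node (tg S P) a (fg U Q) := by
  simp only [repl_node]
  rw [repl_of_pureT hS, repl_of_pureF hU]

lemma hn_sz {L P Q : ETree A} (hL : LTree L) :
    sz P + sz Q < sz (L.repl P Q) := by
  cases hL with
  | @mkT S U a hS hU =>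
      rw [repl_mkT hS hU]
      have h1 : sz P ≤ sz (tg S P) := sz_tg_ge (pureT_hasT hS) P
      have h2 : sz Q ≤ sz (fg U Q) := sz_fg_ge (pureF_hasF hU) Q
      simp only [sz_node]; omega
  | @mkF S U a hU hS =>
      have : (ETree.node U a S).repl P Q = .node (fg U Q) a (tg S P) := by
        simp only [repl_node]
        rw [repl_of_pureT hS, repl_of_pureF hU]
      rw [this]
      have h1 : sz P ≤ sz (tg S P) := sz_tg_ge (pureT_hasT hS) P
      have h2 : sz Q ≤ sz (fg U Q) := sz_fg_ge (pureF_hasF hU) Q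
      simp only [sz_node]; omega

lemma hasT_tg_pure {S E : ETree A} (h : hasT (tg S E)) (hS : pureT S) : hasT E := by
  induction S with
  | leafT => exact h
  | leafF => exact absurd (by simp) hS
  | node l a r hl hr =>
      rw [pureT_node_iff] at hS
      rcases h with h | h
      · exact hl h hS.1
      · exact hr h hS.2

lemma hasF_tg_pure {S E : ETree A} (h : hasF (tg S E)) (hS : pureT S) : hasF E := by
  induction S with
  | leafT => exact h
  | leafF => exact absurd (by simp) hS
  | node l a r hl hr =>
      rw [pureT_node_iff] at hS
      rcases h with h | h
      · exact hl h hS.1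
      · exact hr h hS.2

lemma mx_tg_pure {S E : ETree A} (h : mx (tg S E)) (hS : pureT S) : mx E :=
  ⟨hasT_tg_pure h.1 hS, hasF_tg_pure h.2 hS⟩

end FSCL

namespace FSCL

open ETree

variable {A : Type}

/-- no nontrivial pureT-graft decomposition -/
def NTp (X : ETree A) : Prop :=
  ∀ ⦃S E : ETree A⦄, pureT S → (∃ l a r, S = .node l a r) → X ≠ tg S E

def NFp (X : ETree A) : Prop :=
  ∀ ⦃U E : ETree A⦄, pureF U → (∃ l a r, U = .node l a r) → X ≠ fg U E

lemma nt_core {S0 U0 Sp1 Sp2 E P Q : ETree A}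
    (hS0 : pureT S0) (hU0 : pureF U0) (hSp1 : pureT Sp1) (hSp2 : pureT Sp2)
    (hE : mx E) (hP : P = .leafT ∨ StarT P) (hQ : Q = .leafF ∨ StarT Q)
    (hne : P ≠ Q)
    (hNTP : StarT P → NTp P) (hNFP : StarT P → NFp P) (hNTQ : StarT Q → NTp Q)
    (eqT : tg S0 P = tg Sp1 E) (eqF : fg U0 Q = tg Sp2 E) : False := by
  rcases hP with rfl | hP
  · -- P = leafT : S0 = tg Sp1 E, but tg Sp1 E has an F leaf
    rw [tg_leafT_id] at eqT
    have : hasF (tg Sp1 E) := hasF_tg_right (pureT_hasT hSp1) hE.2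
    rw [← eqT] at this
    exact hS0 this
  · rcases pt_align hS0 hSp1 hP.mx hE eqT with ⟨S3, hS3, e1, e2⟩ | ⟨S3, hS3, e1, e2⟩
    · -- Sp1 = tg S0 S3, P = tg S3 E
      rcases hS3node : S3 with _ | _ | ⟨s3l, s3a, s3r⟩
      · -- S3 = leafT : P = E
        rw [hS3node, tg_leafT] at e2
        subst e2
        rcases tfc hU0 hSp2 eqF with ⟨SW, hSW, f1, f2⟩ | ⟨UY, hUY, f1, f2⟩
        · rcases hQ with rfl | hQ
          · rcases hSWn : SW with _ | _ | ⟨u, v, w⟩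
            · rw [hSWn, tg_leafT] at f1
              exact hP.ne_leafF f1.symm
            · rw [hSWn] at hSW; exact absurd (by simp) hSW
            · rw [hSWn, tg_node] at f1; exact absurd f1 (by simp)
          · rcases hSWn : SW with _ | _ | ⟨u, v, w⟩
            · rw [hSWn, tg_leafT] at f1
              exact hne f1.symm
            · rw [hSWn] at hSW; exact absurd (by simp) hSW
            · exact hNTQ hQ hSW ⟨_, _, _, hSWn⟩ f1
        · rcases hUYn : UY with _ | _ | ⟨u, v, w⟩
          · rw [hUYn] at hUY; exact absurd (by simp) hUY
          · rw [hUYn, fg_leafF] at f1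
            exact hne f1
          · exact hNFP hP hUY ⟨_, _, _, hUYn⟩ f1
      · rw [hS3node] at hS3; exact absurd (by simp) hS3
      · exact hNTP hP hS3 ⟨_, _, _, hS3node⟩ e2
    · -- S0 = tg Sp1 S3, E = tg S3 P
      rcases tfc hU0 hSp2 eqF with ⟨SW, hSW, f1, f2⟩ | ⟨UY, hUY, f1, f2⟩
      · -- Q = tg SW E
        rcases hQ with rfl | hQ
        · rcases hSWn : SW with _ | _ | ⟨u, v, w⟩
          · rw [hSWn, tg_leafT] at f1
            rw [← f1] at hE
            exact hasT_leafF hE.1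
          · rw [hSWn] at hSW; exact absurd (by simp) hSW
          · rw [hSWn, tg_node] at f1; exact absurd f1 (by simp)
        · rcases hSWn : SW with _ | _ | ⟨u, v, w⟩
          · rw [hSWn, tg_leafT] at f1
            -- Q = E = tg S3 P
            rw [e2] at f1
            rcases hS3node : S3 with _ | _ | ⟨s3l, s3a, s3r⟩
            · rw [hS3node, tg_leafT] at f1
              exact hne f1.symm
            · rw [hS3node] at hS3; exact absurd (by simp) hS3
            · exact hNTQ hQ hS3 ⟨_, _, _, hS3node⟩ f1
          · rw [hSWn] at hSW; exact absurd (by simp) hSW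
          · exact hNTQ hQ hSW ⟨_, _, _, hSWn⟩ f1
      · -- E = fg UY Q ; with e2 : E = tg S3 P
        have heq : fg UY Q = tg S3 P := by rw [← f1, e2]
        rcases tfc hUY hS3 heq with ⟨SW2, hSW2, g1, g2⟩ | ⟨UY2, hUY2, g1, g2⟩
        · rcases hQ with rfl | hQ
          · rcases hSW2n : SW2 with _ | _ | ⟨u, v, w⟩
            · rw [hSW2n, tg_leafT] at g1
              exact hP.ne_leafF g1.symm
            · rw [hSW2n] at hSW2; exact absurd (by simp) hSW2
            · rw [hSW2n, tg_node] at g1; exact absurd g1 (by simp)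
          · rcases hSW2n : SW2 with _ | _ | ⟨u, v, w⟩
            · rw [hSW2n, tg_leafT] at g1
              exact hne g1.symm
            · rw [hSW2n] at hSW2; exact absurd (by simp) hSW2
            · exact hNTQ hQ hSW2 ⟨_, _, _, hSW2n⟩ g1
        · rcases hUY2n : UY2 with _ | _ | ⟨u, v, w⟩
          · rw [hUY2n] at hUY2; exact absurd (by simp) hUY2
          · rw [hUY2n, fg_leafF] at g1
            exact hne g1
          · exact hNFP hP hUY2 ⟨_, _, _, hUY2n⟩ g1

end FSCL

namespace FSCL

open ETree

variable {A : Type}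

lemma hu_t {S S' P P' : ETree A} (hS : pureT S) (hS' : pureT S')
    (hP : P = .leafT ∨ StarT P) (hP' : P' = .leafT ∨ StarT P')
    (hNTP : StarT P → NTp P) (hNTP' : StarT P' → NTp P')
    (h : tg S P = tg S' P') : S = S' ∧ P = P' := by
  rcases hP with rfl | hP
  · rcases hP' with rfl | hP'
    · rw [tg_leafT_id, tg_leafT_id] at h
      exact ⟨h, rfl⟩
    · exfalso
      rw [tg_leafT_id] at h
      have : hasF (tg S' P') := hasF_tg_right (pureT_hasT hS') hP'.mx.2
      rw [← h] at this
      exact hS this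
  · rcases hP' with rfl | hP'
    · exfalso
      rw [tg_leafT_id] at h
      have : hasF (tg S P) := hasF_tg_right (pureT_hasT hS) hP.mx.2
      rw [h] at this
      exact hS' this
    · rcases pt_align hS hS' hP.mx hP'.mx h with ⟨S3, hS3, e1, e2⟩ | ⟨S3, hS3, e1, e2⟩
      · rcases hS3n : S3 with _ | _ | ⟨u, v, w⟩
        · rw [hS3n, tg_leafT_id] at e1
          rw [hS3n, tg_leafT] at e2
          exact ⟨e1.symm, e2⟩
        · rw [hS3n] at hS3; exact absurd (by simp) hS3
        · exact absurd e2 (hNTP hP hS3 ⟨_, _, _, hS3n⟩)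
      · rcases hS3n : S3 with _ | _ | ⟨u, v, w⟩
        · rw [hS3n, tg_leafT_id] at e1
          rw [hS3n, tg_leafT] at e2
          exact ⟨e1, e2.symm⟩
        · rw [hS3n] at hS3; exact absurd (by simp) hS3
        · exact absurd e2 (hNTP' hP' hS3 ⟨_, _, _, hS3n⟩)

lemma hu_f {U U' Q Q' : ETree A} (hU : pureF U) (hU' : pureF U')
    (hQ : Q = .leafF ∨ StarT Q) (hQ' : Q' = .leafF ∨ StarT Q')
    (hNFQ : StarT Q → NFp Q) (hNFQ' : StarT Q' → NFp Q')
    (h : fg U Q = fg U' Q') : U = U' ∧ Q = Q' := by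
  rcases hQ with rfl | hQ
  · rcases hQ' with rfl | hQ'
    · rw [fg_leafF_id, fg_leafF_id] at h
      exact ⟨h, rfl⟩
    · exfalso
      rw [fg_leafF_id] at h
      have : hasT (fg U' Q') := hasT_fg_right (pureF_hasF hU') hQ'.mx.1
      rw [← h] at this
      exact hU this
  · rcases hQ' with rfl | hQ'
    · exfalso
      rw [fg_leafF_id] at h
      have : hasT (fg U Q) := hasT_fg_right (pureF_hasF hU) hQ.mx.1
      rw [h] at this
      exact hU' this
    · rcases pf_align hU hU' hQ.mx hQ'.mx h with ⟨U3, hU3, e1, e2⟩ | ⟨U3, hU3, e1, e2⟩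
      · rcases hU3n : U3 with _ | _ | ⟨u, v, w⟩
        · rw [hU3n] at hU3; exact absurd (by simp) hU3
        · rw [hU3n, fg_leafF_id] at e1
          rw [hU3n, fg_leafF] at e2
          exact ⟨e1.symm, e2⟩
        · exact absurd e2 (hNFQ hQ hU3 ⟨_, _, _, hU3n⟩)
      · rcases hU3n : U3 with _ | _ | ⟨u, v, w⟩
        · rw [hU3n] at hU3; exact absurd (by simp) hU3
        · rw [hU3n, fg_leafF_id] at e1
          rw [hU3n, fg_leafF] at e2
          exact ⟨e1, e2.symm⟩
        · exact absurd e2 (hNFQ' hQ' hU3 ⟨_, _, _, hU3n⟩)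

lemma hu_cross {S U' P Q' : ETree A} (hS : pureT S) (hU' : pureF U')
    (hP : P = .leafT ∨ StarT P) (hQ' : Q' = .leafF ∨ StarT Q')
    (hNTQ' : StarT Q' → NTp Q') (hNFP : StarT P → NFp P)
    (h : tg S P = fg U' Q') : P = Q' ∧ StarT P := by
  rcases tfc hU' hS h.symm with ⟨SW, hSW, f1, f2⟩ | ⟨UY, hUY, f1, f2⟩
  · rcases hSWn : SW with _ | _ | ⟨u, v, w⟩
    · rw [hSWn, tg_leafT] at f1
      rcases hQ' with rfl | hQ'
      · exfalso
        rcases hP with rfl | hP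
        · exact absurd f1 (by simp)
        · exact hP.ne_leafF f1.symm
      · rcases hP with rfl | hP
        · exact absurd f1 hQ'.ne_leafT
        · exact ⟨f1.symm, hP⟩
    · rw [hSWn] at hSW; exact absurd (by simp) hSW
    · exfalso
      rcases hQ' with rfl | hQ'
      · rw [hSWn, tg_node] at f1; exact absurd f1 (by simp)
      · exact hNTQ' hQ' hSW ⟨_, _, _, hSWn⟩ f1
  · rcases hUYn : UY with _ | _ | ⟨u, v, w⟩
    · rw [hUYn] at hUY; exact absurd (by simp) hUY
    · rw [hUYn, fg_leafF] at f1
      rcases hP with rfl | hP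
      · exfalso
        rcases hQ' with rfl | hQ'
        · exact absurd f1 (by simp)
        · exact hQ'.ne_leafT f1.symm
      · exact ⟨f1, hP⟩
    · exfalso
      rcases hP with rfl | hP
      · rw [hUYn, fg_node] at f1; exact absurd f1 (by simp)
      · exact hNFP hP hUY ⟨_, _, _, hUYn⟩ f1

end FSCL

namespace FSCL

open ETree

variable {A : Type}

lemma Pair.inv {P Q : ETree A} (h : Pair P Q) :
    (P = .leafT ∧ Q = .leafF) ∨
    (∃ B C Y, Pair B C ∧ StarT Y ∧ P = tg B Y ∧ Q = tg C Y) ∨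
    (∃ B C Y, Pair B C ∧ StarT Y ∧ P = fg B Y ∧ Q = fg C Y) := by
  cases h with
  | base => exact Or.inl ⟨rfl, rfl⟩
  | stepT hBC hY => exact Or.inr (Or.inl ⟨_, _, _, hBC, hY, rfl, rfl⟩)
  | stepF hBC hY => exact Or.inr (Or.inr ⟨_, _, _, hBC, hY, rfl, rfl⟩)

end FSCL

namespace FSCL

open ETree

variable {A : Type}

def HUp (X : ETree A) : Prop :=
  ∀ ⦃L P Q L' P' Q' : ETree A⦄, LTree L → Pair P Q → LTree L' → Pair P' Q' →
    X = L.repl P Q → X = L'.repl P' Q' → L = L' ∧ P = P' ∧ Q = Q'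

def CSp (X : ETree A) : Prop :=
  ∀ ⦃P Y Q Z : ETree A⦄, StarT P → StarT Y → StarT Q → StarT Z →
    X = tg P Y → X = fg Q Z → False

def L4p (X : ETree A) : Prop :=
  ∀ ⦃P Y Q Z : ETree A⦄, StarT P → StarT Y → StarT Q → StarT Z →
    X = tg P Y → X = tg Q Z →
    (P = Q ∧ Y = Z) ∨ (∃ M, StarT M ∧ Q = tg P M ∧ Y = tg M Z) ∨
      (∃ M, StarT M ∧ P = tg Q M ∧ Z = tg M Y)

def L5p (X : ETree A) : Prop :=
  ∀ ⦃P Y Q Z : ETree A⦄, StarT P → StarT Y → StarT Q → StarT Z →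
    X = fg P Y → X = fg Q Z →
    (P = Q ∧ Y = Z) ∨ (∃ M, StarT M ∧ Q = fg P M ∧ Y = fg M Z) ∨
      (∃ M, StarT M ∧ P = fg Q M ∧ Z = fg M Y)

lemma tg_of_repl (L P Q Y : ETree A) : tg (L.repl P Q) Y = L.repl (tg P Y) (tg Q Y) := by
  simp [tg, repl_repl]

lemma fg_of_repl (L P Q Y : ETree A) : fg (L.repl P Q) Y = L.repl (fg P Y) (fg Q Y) := by
  simp [fg, repl_repl]

lemma sz_slot_lt_t {A0 Y : ETree A} (h : A0 = .leafT ∨ StarT A0) (hY : StarT Y) :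
    sz A0 < sz (tg A0 Y) := by
  rcases h with rfl | h
  · have := hY.sz3; simp only [tg_leafT, sz_leafT]; omega
  · exact sz_tg_gt' h.mx.1 (by have := hY.sz3; omega)

lemma sz_slot_lt_f {A0 Y : ETree A} (h : A0 = .leafF ∨ StarT A0) (hY : StarT Y) :
    sz A0 < sz (fg A0 Y) := by
  rcases h with rfl | h
  · have := hY.sz3; simp only [fg_leafF, sz_leafF]; omega
  · exact sz_fg_gt' h.mx.2 (by have := hY.sz3; omega)

theorem mega (n : ℕ) :
    (∀ X : ETree A, StarT X → sz X ≤ n → NTp X ∧ NFp X ∧ HUp X ∧ CSp X ∧ L4p X ∧ L5p X) ∧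
    (∀ P Q : ETree A, sz P + sz Q ≤ n → Pair P Q → Pair Q P → False) := by
  induction n using Nat.strong_induction_on with
  | _ n IH =>
  have NTrec : ∀ W : ETree A, StarT W → sz W < n → NTp W :=
    fun W hW hlt => ((IH _ hlt).1 W hW le_rfl).1
  have NFrec : ∀ W : ETree A, StarT W → sz W < n → NFp W :=
    fun W hW hlt => ((IH _ hlt).1 W hW le_rfl).2.1
  have CSrec : ∀ W : ETree A, StarT W → sz W < n → CSp W :=
    fun W hW hlt => ((IH _ hlt).1 W hW le_rfl).2.2.2.1
  have L4rec : ∀ W : ETree A, StarT W → sz W < n → L4p W :=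
    fun W hW hlt => ((IH _ hlt).1 W hW le_rfl).2.2.2.2.1
  have PArec : ∀ P Q : ETree A, sz P + sz Q < n → Pair P Q → Pair Q P → False :=
    fun P Q hlt h1 h2 => (IH _ hlt).2 P Q le_rfl h1 h2
  -- NT
  have NT : ∀ X : ETree A, StarT X → sz X ≤ n → NTp X := by
    intro X hX hszX S E hS hSnode hEq
    obtain ⟨l1, b, l2, rfl⟩ := hSnode
    rw [pureT_node_iff] at hS
    have hE : mx E := mx_tg_pure (hEq ▸ hX.mx) (pureT_node_iff.2 hS)
    obtain ⟨L, P, Q, hL, hPQ, hXr⟩ := hn hX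
    have hszPQ : sz P + sz Q < sz X := by rw [hXr]; exact hn_sz hL
    have hp1 := sz_pos P
    have hp2 := sz_pos Q
    have hNTP : StarT P → NTp P := fun h => NTrec P h (by omega)
    have hNFP : StarT P → NFp P := fun h => NFrec P h (by omega)
    have hNTQ : StarT Q → NTp Q := fun h => NTrec Q h (by omega)
    cases hL with
    | @mkT S0 U0 a hS0 hU0 =>
        rw [repl_mkT hS0 hU0] at hXr
        rw [hXr] at hEq
        simp only [tg_node, ETree.node.injEq] at hEq
        exact nt_core hS0 hU0 hS.1 hS.2 hE hPQ.fst hPQ.snd hPQ.ne hNTP hNFP hNTQ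
          hEq.1 hEq.2.2
    | @mkF S0 U0 a hU0 hS0 =>
        have hrep : (ETree.node U0 a S0).repl P Q = .node (fg U0 Q) a (tg S0 P) := by
          simp only [repl_node]
          rw [repl_of_pureT hS0, repl_of_pureF hU0]
        rw [hrep] at hXr
        rw [hXr] at hEq
        simp only [tg_node, ETree.node.injEq] at hEq
        exact nt_core hS0 hU0 hS.2 hS.1 hE hPQ.fst hPQ.snd hPQ.ne hNTP hNFP hNTQ
          hEq.2.2 hEq.1
  -- NF by flipping
  have NF : ∀ X : ETree A, StarT X → sz X ≤ n → NFp X := by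
    intro X hX hszX U E hU hUnode hEq
    obtain ⟨l1, b, l2, rfl⟩ := hUnode
    exact NT (fl X) hX.fl (by simpa using hszX) (S := fl (.node l1 b l2)) (E := fl E)
      (pureT_fl hU) ⟨fl l1, b, fl l2, by simp⟩ (by rw [hEq, fl_fg])
  -- HU
  have HU : ∀ X : ETree A, StarT X → sz X ≤ n → HUp X := by
    intro X hX hszX L P Q L' P' Q' hL hPQ hL' hPQ' hX1 hX2
    have hszPQ : sz P + sz Q < sz X := by rw [hX1]; exact hn_sz hL
    have hszPQ' : sz P' + sz Q' < sz X := by rw [hX2]; exact hn_sz hL'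
    have hp1 := sz_pos P; have hp2 := sz_pos Q
    have hp1' := sz_pos P'; have hp2' := sz_pos Q'
    have hNTP : StarT P → NTp P := fun h => NTrec P h (by omega)
    have hNTP' : StarT P' → NTp P' := fun h => NTrec P' h (by omega)
    have hNFP : StarT P → NFp P := fun h => NFrec P h (by omega)
    have hNFP' : StarT P' → NFp P' := fun h => NFrec P' h (by omega)
    have hNFQ : StarT Q → NFp Q := fun h => NFrec Q h (by omega)
    have hNFQ' : StarT Q' → NFp Q' := fun h => NFrec Q' h (by omega)
    have hNTQ : StarT Q → NTp Q := fun h => NTrec Q h (by omega)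
    have hNTQ' : StarT Q' → NTp Q' := fun h => NTrec Q' h (by omega)
    have hEq : L.repl P Q = L'.repl P' Q' := by rw [← hX1, ← hX2]
    cases hL with
    | @mkT S0 U0 a hS0 hU0 =>
        cases hL' with
        | @mkT S1 U1 a' hS1 hU1 =>
            rw [repl_mkT hS0 hU0, repl_mkT hS1 hU1] at hEq
            simp only [ETree.node.injEq] at hEq
            obtain ⟨e1, e2, e3⟩ := hEq
            obtain ⟨eS, eP⟩ := hu_t hS0 hS1 hPQ.fst hPQ'.fst hNTP hNTP' e1
            obtain ⟨eU, eQ⟩ := hu_f hU0 hU1 hPQ.snd hPQ'.snd hNFQ hNFQ' e3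
            subst eS; subst eP; subst eU; subst eQ; subst e2
            exact ⟨rfl, rfl, rfl⟩
        | @mkF S1 U1 a' hU1 hS1 =>
            exfalso
            have hrep : (ETree.node U1 a' S1).repl P' Q' = .node (fg U1 Q') a' (tg S1 P') := by
              simp only [repl_node]
              rw [repl_of_pureT hS1, repl_of_pureF hU1]
            rw [repl_mkT hS0 hU0, hrep] at hEq
            simp only [ETree.node.injEq] at hEq
            obtain ⟨e1, e2, e3⟩ := hEq
            obtain ⟨ePQ, hPs⟩ := hu_cross hS0 hU1 hPQ.fst hPQ'.snd hNTQ' hNFP e1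
            obtain ⟨eQP, hPs'⟩ := hu_cross hS1 hU0 hPQ'.fst hPQ.snd hNTQ hNFP' e3.symm
            subst ePQ; subst eQP
            exact PArec P P' (by omega) hPQ hPQ'
    | @mkF S0 U0 a hU0 hS0 =>
        have hrep : (ETree.node U0 a S0).repl P Q = .node (fg U0 Q) a (tg S0 P) := by
          simp only [repl_node]
          rw [repl_of_pureT hS0, repl_of_pureF hU0]
        cases hL' with
        | @mkT S1 U1 a' hS1 hU1 =>
            exfalso
            rw [hrep, repl_mkT hS1 hU1] at hEq
            simp only [ETree.node.injEq] at hEq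
            obtain ⟨e1, e2, e3⟩ := hEq
            obtain ⟨ePQ', hPs'⟩ := hu_cross hS1 hU0 hPQ'.fst hPQ.snd hNTQ hNFP' e1.symm
            obtain ⟨ePQ, hPs⟩ := hu_cross hS0 hU1 hPQ.fst hPQ'.snd hNTQ' hNFP e3
            subst ePQ; subst ePQ'
            exact PArec P P' (by omega) hPQ hPQ'
        | @mkF S1 U1 a' hU1 hS1 =>
            have hrep' : (ETree.node U1 a' S1).repl P' Q' = .node (fg U1 Q') a' (tg S1 P') := by
              simp only [repl_node]
              rw [repl_of_pureT hS1, repl_of_pureF hU1]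
            rw [hrep, hrep'] at hEq
            simp only [ETree.node.injEq] at hEq
            obtain ⟨e1, e2, e3⟩ := hEq
            obtain ⟨eS, eP⟩ := hu_t hS0 hS1 hPQ.fst hPQ'.fst hNTP hNTP' e3
            obtain ⟨eU, eQ⟩ := hu_f hU0 hU1 hPQ.snd hPQ'.snd hNFQ hNFQ' e1
            subst eS; subst eP; subst eU; subst eQ; subst e2
            exact ⟨rfl, rfl, rfl⟩
  -- CS
  have CS : ∀ X : ETree A, StarT X → sz X ≤ n → CSp X := by
    intro X hX hszX P Y Q Z hP hY hQ hZ hX1 hX2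
    obtain ⟨L, Pa, Pb, hL, hAB, hPr⟩ := hn hP
    obtain ⟨L', Qa, Qb, hL', hAB', hQr⟩ := hn hQ
    have d1 : X = L.repl (tg Pa Y) (tg Pb Y) := by rw [hX1, hPr, tg_of_repl]
    have d2 : X = L'.repl (fg Qa Z) (fg Qb Z) := by rw [hX2, hQr, fg_of_repl]
    obtain ⟨eL, eA, eB⟩ := HU X hX hszX hL (hAB.stepT hY) hL' (hAB'.stepF hZ) d1 d2
    have hs1 : sz (tg Pa Y) + sz (tg Pb Y) < sz X := by rw [d1]; exact hn_sz hL
    have hsp1 := sz_pos (tg Pa Y); have hsp2 := sz_pos (tg Pb Y)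
    rcases hAB.fst with rfl | hPa
    · rw [tg_leafT] at eA
      rcases hAB'.fst with rfl | hQa
      · rw [fg_leafT] at eA
        exact hY.ne_leafT eA
      · rcases hAB.snd with rfl | hPb
        · rw [tg_leafF] at eB
          rcases hAB'.snd with rfl | hQb
          · rw [fg_leafF] at eB
            exact hZ.ne_leafF eB.symm
          · obtain ⟨u, v, w, hw⟩ := hQb.isNode
            rw [hw, fg_node] at eB
            exact absurd eB (by simp)
        · rcases hAB'.snd with rfl | hQb
          · rw [fg_leafF] at eB
            obtain ⟨u, v, w, hw⟩ := hQa.isNode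
            have g1 : sz Z < sz Y := by
              rw [eA]; exact sz_fg_gt (hw ▸ hQa.mx.2) hw Z
            obtain ⟨u', v', w', hw'⟩ := hPb.isNode
            have g2 : sz Y < sz Z := by
              rw [← eB]; exact sz_tg_gt (hw' ▸ hPb.mx.1) hw' Y
            omega
          · exact CSrec _ (hPb.land hY) (by omega) hPb hY hQb hZ rfl eB
    · rcases hAB'.fst with rfl | hQa
      · rw [fg_leafT] at eA
        obtain ⟨u, v, w, hw⟩ := hPa.isNode
        rw [hw, tg_node] at eA
        exact absurd eA (by simp)
      · exact CSrec _ (hPa.land hY) (by omega) hPa hY hQa hZ rfl eA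
  -- L4
  have L4 : ∀ X : ETree A, StarT X → sz X ≤ n → L4p X := by
    intro X hX hszX P Y Q Z hP hY hQ hZ hX1 hX2
    obtain ⟨L, Pa, Pb, hL, hAB, hPr⟩ := hn hP
    obtain ⟨L', Qa, Qb, hL', hAB', hQr⟩ := hn hQ
    have d1 : X = L.repl (tg Pa Y) (tg Pb Y) := by rw [hX1, hPr, tg_of_repl]
    have d2 : X = L'.repl (tg Qa Z) (tg Qb Z) := by rw [hX2, hQr, tg_of_repl]
    obtain ⟨eL, eA, eB⟩ := HU X hX hszX hL (hAB.stepT hY) hL' (hAB'.stepT hZ) d1 d2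
    subst eL
    have hs1 : sz (tg Pa Y) + sz (tg Pb Y) < sz X := by rw [d1]; exact hn_sz hL
    have hsp1 := sz_pos (tg Pa Y); have hsp2 := sz_pos (tg Pb Y)
    rcases hAB.fst with rfl | hPa
    · rw [tg_leafT] at eA
      rcases hAB'.fst with rfl | hQa
      · -- both leafT : Y = Z, cancel B
        rw [tg_leafT] at eA
        subst eA
        have eBB : Pb = Qb := tg_cancel_left hY.mx eB
        subst eBB
        exact Or.inl ⟨by rw [hPr, hQr], rfl⟩
      · -- Y = tg Qa Z
        refine Or.inr (Or.inl ⟨Qa, hQa, ?_, eA⟩)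
        -- Q = tg P Qa
        have eBB : Qb = tg Pb Qa := by
          rw [eA, ← tg_tg] at eB
          exact (tg_cancel_left hZ.mx eB).symm
        rw [hQr, hPr, tg_of_repl, tg_leafT, eBB]
    · rcases hAB'.fst with rfl | hQa
      · -- Z = tg Pa Y
        rw [tg_leafT] at eA
        refine Or.inr (Or.inr ⟨Pa, hPa, ?_, eA.symm⟩)
        have eBB : Pb = tg Qb Pa := by
          rw [← eA, ← tg_tg] at eB
          exact tg_cancel_left hY.mx eB
        rw [hQr, hPr, tg_of_repl, tg_leafT, eBB]
      · -- both star : recurse on the A-slot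
        rcases L4rec _ (hPa.land hY) (by omega) hPa hY hQa hZ rfl eA with
          ⟨f1, f2⟩ | ⟨M, hM, m1, m2⟩ | ⟨M, hM, m1, m2⟩
        · subst f1; subst f2
          have eBB : Pb = Qb := tg_cancel_left hY.mx eB
          subst eBB
          exact Or.inl ⟨by rw [hPr, hQr], rfl⟩
        · refine Or.inr (Or.inl ⟨M, hM, ?_, m2⟩)
          have eBB : Qb = tg Pb M := by
            rw [m2, ← tg_tg] at eB
            exact (tg_cancel_left hZ.mx eB).symm
          rw [hQr, hPr, tg_of_repl, m1, eBB]
        · refine Or.inr (Or.inr ⟨M, hM, ?_, m2⟩)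
          have eBB : Pb = tg Qb M := by
            rw [m2, ← tg_tg] at eB
            exact tg_cancel_left hY.mx eB
          rw [hQr, hPr, tg_of_repl, m1, eBB]
  -- L5 by flipping
  have L5 : ∀ X : ETree A, StarT X → sz X ≤ n → L5p X := by
    intro X hX hszX P Y Q Z hP hY hQ hZ hX1 hX2
    have h1 : fl X = tg (fl P) (fl Y) := by rw [hX1, fl_fg]
    have h2 : fl X = tg (fl Q) (fl Z) := by rw [hX2, fl_fg]
    rcases L4 (fl X) hX.fl (by simpa using hszX) hP.fl hY.fl hQ.fl hZ.fl h1 h2 with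
      ⟨e1, e2⟩ | ⟨M, hM, m1, m2⟩ | ⟨M, hM, m1, m2⟩
    · exact Or.inl ⟨fl_inj e1, fl_inj e2⟩
    · refine Or.inr (Or.inl ⟨fl M, hM.fl, ?_, ?_⟩)
      · apply fl_inj; rw [fl_fg, fl_fl]; exact m1
      · apply fl_inj; rw [fl_fg, fl_fl]; exact m2
    · refine Or.inr (Or.inr ⟨fl M, hM.fl, ?_, ?_⟩)
      · apply fl_inj; rw [fl_fg, fl_fl]; exact m1
      · apply fl_inj; rw [fl_fg, fl_fl]; exact m2
  -- PA
  have PA : ∀ P Q : ETree A, sz P + sz Q ≤ n → Pair P Q → Pair Q P → False := by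
    intro P Q hsz h1 h2
    have hPs : StarT P := by
      rcases h1.fst with rfl | h
      · rcases h2.snd with h' | h'
        · exact absurd h' (by simp)
        · exact absurd rfl h'.ne_leafT
      · exact h
    have hQs : StarT Q := by
      rcases h1.snd with rfl | h
      · rcases h2.fst with h' | h'
        · exact absurd h' (by simp)
        · exact absurd rfl h'.ne_leafF
      · exact h
    have hP3 := hPs.sz3
    have hQ3 := hQs.sz3
    cases h1 with
    | base => exact hPs.ne_leafT rfl
    | @stepT A0 B0 Y hAB0 hY =>
        -- P = tg A0 Y, Q = tg B0 Y
        rcases hAB0.snd with rfl | hB0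
        · exact hQs.ne_leafF (by simp)
        rcases h2.inv with ⟨hq, hp⟩ | ⟨B1, A1, Y', hBA1, hY', hq, hp⟩ |
          ⟨B1, A1, Y', hBA1, hY', hq, hp⟩
        · exact hQs.ne_leafT hq
        · -- hq : tg B0 Y = tg B1 Y', hp : tg A0 Y = tg A1 Y'
          rcases hBA1.fst with rfl | hB1
          · -- B1 = leafT
            rw [tg_leafT] at hq
            rcases hBA1.snd with rfl | hA1
            · rw [tg_leafF] at hp
              exact hPs.ne_leafF hp
            · rcases hAB0.fst with rfl | hA0
              · -- A0 = leafT : P = Y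
                rw [tg_leafT] at hp
                obtain ⟨u, v, w, hw⟩ := hA1.isNode
                have g1 : sz Y' < sz Y := by
                  rw [hp]; exact sz_tg_gt (hw ▸ hA1.mx.1) hw Y'
                obtain ⟨u', v', w', hw'⟩ := hB0.isNode
                have g2 : sz Y < sz Y' := by
                  rw [← hq]; exact sz_tg_gt (hw' ▸ hB0.mx.1) hw' Y
                omega
              · rw [← hq, ← tg_tg] at hp
                have e := tg_cancel_left hY.mx hp
                have hp2 : Pair B0 A0 := by
                  have h' := hBA1.stepT hB0
                  rwa [tg_leafT, ← e] at h'
                refine PArec A0 B0 ?_ hAB0 hp2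
                have g1 : sz A0 < sz (tg A0 Y) := sz_slot_lt_t hAB0.fst hY
                have g2 : sz B0 < sz (tg B0 Y) := sz_slot_lt_t (Or.inr hB0) hY
                omega
          · rcases hBA1.snd with rfl | hA1
            · rw [tg_leafF] at hp
              exact hPs.ne_leafF hp
            rcases L4rec (tg B0 Y) hQs (by omega) hB1 hY' hB0 hY hq rfl with
              ⟨f1, f2⟩ | ⟨M, hM, m1, m2⟩ | ⟨M, hM, m1, m2⟩
            · -- f1 : B1 = B0, f2 : Y' = Y
              have e : A0 = A1 := by
                rw [f2] at hp
                exact tg_cancel_left hY.mx hp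
              rw [f1, ← e] at hBA1
              refine PArec A0 B0 ?_ hAB0 hBA1
              have g1 : sz A0 < sz (tg A0 Y) := sz_slot_lt_t hAB0.fst hY
              have g2 : sz B0 < sz (tg B0 Y) := sz_slot_lt_t (Or.inr hB0) hY
              omega
            · -- m1 : B0 = tg B1 M, m2 : Y' = tg M Y
              rw [m2, ← tg_tg] at hp
              have e := tg_cancel_left hY.mx hp
              have hp2 : Pair B0 A0 := by
                have h' := hBA1.stepT hM
                rwa [← m1, ← e] at h'
              refine PArec A0 B0 ?_ hAB0 hp2
              have g1 : sz A0 < sz (tg A0 Y) := sz_slot_lt_t hAB0.fst hY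
              have g2 : sz B0 < sz (tg B0 Y) := sz_slot_lt_t (Or.inr hB0) hY
              omega
            · -- m1 : B1 = tg B0 M, m2 : Y = tg M Y'
              rw [m2, ← tg_tg] at hp
              have e := tg_cancel_left hY'.mx hp
              have hp2 : Pair A1 B1 := by
                have h' := hAB0.stepT hM
                rwa [e, ← m1] at h'
              refine PArec A1 B1 ?_ hp2 hBA1
              have g1 : sz A1 < sz (tg A1 Y') := sz_slot_lt_t (Or.inr hA1) hY'
              have gg : tg A1 Y' = tg A0 Y := by rw [← hp, tg_tg, ← m2]
              rw [gg] at g1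
              have g2 : sz B1 < sz (tg B1 Y') := sz_slot_lt_t (Or.inr hB1) hY'
              rw [← hq] at g2
              omega
        · -- hq : tg B0 Y = fg B1 Y' : CS contradiction
          rcases hBA1.fst with rfl | hB1
          · rw [fg_leafT] at hq
            exact hQs.ne_leafT hq
          · exact CSrec (tg B0 Y) hQs (by omega) hB0 hY hB1 hY' rfl hq
    | @stepF A0 B0 Y hAB0 hY =>
        -- P = fg A0 Y, Q = fg B0 Y
        rcases hAB0.fst with rfl | hA0
        · exact hPs.ne_leafT (by simp)
        rcases h2.inv with ⟨hq, hp⟩ | ⟨B1, A1, Y', hBA1, hY', hq, hp⟩ |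
          ⟨B1, A1, Y', hBA1, hY', hq, hp⟩
        · exact hQs.ne_leafT hq
        · -- hq : fg B0 Y = tg B1 Y', hp : fg A0 Y = tg A1 Y' : CS on P
          rcases hBA1.snd with rfl | hA1
          · rw [tg_leafF] at hp
            exact hPs.ne_leafF hp
          · exact CSrec (fg A0 Y) hPs (by omega) hA1 hY' hA0 hY hp rfl
        · -- hq : fg B0 Y = fg B1 Y', hp : fg A0 Y = fg A1 Y'
          rcases hBA1.fst with rfl | hB1
          · rw [fg_leafT] at hq
            exact hQs.ne_leafT hq
          rcases hBA1.snd with rfl | hA1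
          · -- A1 = leafF : hp : fg A0 Y = Y'
            rw [fg_leafF] at hp
            rcases hAB0.snd with rfl | hB0
            · -- B0 = leafF : hq : Y = fg B1 Y'
              rw [fg_leafF] at hq
              obtain ⟨u, v, w, hw⟩ := hA0.isNode
              have g1 : sz Y < sz Y' := by
                rw [← hp]; exact sz_fg_gt (hw ▸ hA0.mx.2) hw Y
              obtain ⟨u', v', w', hw'⟩ := hB1.isNode
              have g2 : sz Y' < sz Y := by
                rw [hq]; exact sz_fg_gt (hw' ▸ hB1.mx.2) hw' Y'
              omega
            · rw [← hp, ← fg_fg] at hq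
              have e := fg_cancel_left hY.mx hq
              have hp2 : Pair B0 A0 := by
                have h' := hBA1.stepF hA0
                rwa [fg_leafF, ← e] at h'
              refine PArec A0 B0 ?_ hAB0 hp2
              have g1 : sz A0 < sz (fg A0 Y) := sz_slot_lt_f (Or.inr hA0) hY
              have g2 : sz B0 < sz (fg B0 Y) := sz_slot_lt_f hAB0.snd hY
              omega
          · -- all of B1, A1 star
            rcases hAB0.snd with rfl | hB0
            · -- B0 = leafF : hq : Y = fg B1 Y'
              rw [fg_leafF] at hq
              rw [hq, ← fg_fg] at hp
              have e := fg_cancel_left hY'.mx hp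
              have hp2 : Pair A1 B1 := by
                have h' := hAB0.stepF hB1
                rwa [e, fg_leafF] at h'
              refine PArec A1 B1 ?_ hp2 hBA1
              simp only [fg_leafF] at hsz
              have g1 : sz A1 < sz (fg A1 Y') := sz_slot_lt_f (Or.inr hA1) hY'
              have gg : fg A1 Y' = fg A0 Y := by rw [← hp, fg_fg, ← hq]
              rw [gg] at g1
              have g2 : sz B1 < sz (fg B1 Y') := sz_slot_lt_f (Or.inr hB1) hY'
              rw [← hq] at g2
              omega
            rcases L5 (fg B0 Y) hQs (by omega) hB1 hY' hB0 hY hq rfl with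
              ⟨f1, f2⟩ | ⟨M, hM, m1, m2⟩ | ⟨M, hM, m1, m2⟩
            · -- f1 : B1 = B0, f2 : Y' = Y
              have e : A0 = A1 := by
                rw [f2] at hp
                exact fg_cancel_left hY.mx hp
              rw [f1, ← e] at hBA1
              refine PArec A0 B0 ?_ hAB0 hBA1
              have g1 : sz A0 < sz (fg A0 Y) := sz_slot_lt_f (Or.inr hA0) hY
              have g2 : sz B0 < sz (fg B0 Y) := sz_slot_lt_f (Or.inr hB0) hY
              omega
            · -- m1 : B0 = fg B1 M, m2 : Y' = fg M Y
              rw [m2, ← fg_fg] at hp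
              have e := fg_cancel_left hY.mx hp
              have hp2 : Pair B0 A0 := by
                have h' := hBA1.stepF hM
                rwa [← m1, ← e] at h'
              refine PArec A0 B0 ?_ hAB0 hp2
              have g1 : sz A0 < sz (fg A0 Y) := sz_slot_lt_f (Or.inr hA0) hY
              have g2 : sz B0 < sz (fg B0 Y) := sz_slot_lt_f (Or.inr hB0) hY
              omega
            · -- m1 : B1 = fg B0 M, m2 : Y = fg M Y'
              rw [m2, ← fg_fg] at hp
              have e := fg_cancel_left hY'.mx hp
              have hp2 : Pair A1 B1 := by
                have h' := hAB0.stepF hM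
                rwa [e, ← m1] at h'
              refine PArec A1 B1 ?_ hp2 hBA1
              have g1 : sz A1 < sz (fg A1 Y') := sz_slot_lt_f (Or.inr hA1) hY'
              have gg : fg A1 Y' = fg A0 Y := by rw [← hp, fg_fg, ← m2]
              rw [gg] at g1
              have g2 : sz B1 < sz (fg B1 Y') := sz_slot_lt_f (Or.inr hB1) hY'
              rw [← hq] at g2
              omega
  exact ⟨fun X hX h => ⟨NT X hX h, NF X hX h, HU X hX h, CS X hX h, L4 X hX h, L5 X hX h⟩, PA⟩

end FSCL

namespace FSCL

open ETree

variable {A : Type}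

/-! ### Access to mega facts -/

lemma NT_all {X : ETree A} (h : StarT X) : NTp X := ((mega (sz X)).1 X h le_rfl).1
lemma NF_all {X : ETree A} (h : StarT X) : NFp X := ((mega (sz X)).1 X h le_rfl).2.1
lemma CS_all {X : ETree A} (h : StarT X) : CSp X := ((mega (sz X)).1 X h le_rfl).2.2.2.1
lemma L4_all {X : ETree A} (h : StarT X) : L4p X := ((mega (sz X)).1 X h le_rfl).2.2.2.2.1
lemma L5_all {X : ETree A} (h : StarT X) : L5p X := ((mega (sz X)).1 X h le_rfl).2.2.2.2.2

/-! ### Term grammar for normal forms -/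

inductive TT : STerm A → Prop
  | tt : TT .tt
  | cons (a : A) {P Q} : TT P → TT Q → TT (.or (.and (.atom a) P) Q)

inductive FF : STerm A → Prop
  | ff : FF .ff
  | cons (a : A) {P Q} : FF P → FF Q → FF (.and (.or (.atom a) P) Q)

inductive Lit : STerm A → Prop
  | pos (a : A) {P G} : TT P → FF G → Lit (.or (.and (.atom a) P) G)
  | neg (a : A) {P G} : TT P → FF G → Lit (.or (.and (.neg (.atom a)) P) G)

inductive Star : STerm A → Prop
  | lit {P} : Lit P → Star P
  | sand {P Q} : Star P → Star Q → Star (.and P Q)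
  | sor {P Q} : Star P → Star Q → Star (.or P Q)

inductive SNF : STerm A → Prop
  | isTT {P} : TT P → SNF P
  | isFF {P} : FF P → SNF P
  | mix {P Q} : TT P → Star Q → SNF (.and P Q)

/-! ### se-computations on grammar classes -/

lemma se_tcons (a : A) (P Q : STerm A) (h : pureT (se P)) :
    se (.or (.and (.atom a) P) Q) = .node (se P) a (se Q) := by
  show fg (tg (.node .leafT a .leafF) (se P)) (se Q) = _
  simp only [tg_node, tg_leafT, tg_leafF, fg_node, fg_leafF]
  rw [fg_of_pureT h]

lemma se_fcons (a : A) (P Q : STerm A) (h : pureF (se P)) :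
    se (.and (.or (.atom a) P) Q) = .node (se Q) a (se P) := by
  show tg (fg (.node .leafT a .leafF) (se P)) (se Q) = _
  simp only [fg_node, fg_leafT, fg_leafF, tg_node, tg_leafT]
  rw [tg_of_pureF h]

lemma se_ncons (a : A) (P Q : STerm A) (h : pureT (se P)) (h' : pureF (se Q)) :
    se (.or (.and (.neg (.atom a)) P) Q) = .node (se Q) a (se P) := by
  show fg (tg (fl (.node .leafT a .leafF)) (se P)) (se Q) = _
  simp only [fl_node, fl_leafT, fl_leafF, tg_node, tg_leafT, tg_leafF, fg_node, fg_leafF]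
  rw [fg_of_pureT h]

lemma TT.pure {P : STerm A} (h : TT P) : pureT (se P) := by
  induction h with
  | tt => exact pureT_leafT
  | cons a hP hQ ihP ihQ =>
      rw [se_tcons _ _ _ ihP]
      exact pureT_node_iff.2 ⟨ihP, ihQ⟩

lemma FF.pure {P : STerm A} (h : FF P) : pureF (se P) := by
  induction h with
  | ff => exact pureF_leafF
  | cons a hP hQ ihP ihQ =>
      rw [se_fcons _ _ _ ihP]
      exact pureF_node_iff.2 ⟨ihQ, ihP⟩

lemma Lit.ltree {P : STerm A} (h : Lit P) : LTree (se P) := by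
  cases h with
  | pos a hP hG =>
      rw [se_tcons _ _ _ hP.pure]
      exact LTree.mkT a hP.pure hG.pure
  | neg a hP hG =>
      rw [se_ncons _ _ _ hP.pure hG.pure]
      exact LTree.mkF a hG.pure hP.pure

lemma Star.starT {P : STerm A} (h : Star P) : StarT (se P) := by
  induction h with
  | lit hL => exact .lit hL.ltree
  | sand h1 h2 ih1 ih2 => exact .land ih1 ih2
  | sor h1 h2 ih1 ih2 => exact .lor ih1 ih2

/-! ### syntactic injectivity on pure classes -/

lemma tt_inj {P Q : STerm A} (hP : TT P) (hQ : TT Q) (h : se P = se Q) : P = Q := by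
  induction hP generalizing Q with
  | tt =>
      cases hQ with
      | tt => rfl
      | cons a h1 h2 => rw [se_tcons _ _ _ h1.pure] at h; exact absurd h.symm (by simp)
  | cons a h1 h2 ih1 ih2 =>
      cases hQ with
      | tt => rw [se_tcons _ _ _ h1.pure] at h; exact absurd h (by simp)
      | cons b g1 g2 =>
          rw [se_tcons _ _ _ h1.pure, se_tcons _ _ _ g1.pure] at h
          simp only [ETree.node.injEq] at h
          rw [ih1 g1 h.1, ih2 g2 h.2.2, h.2.1]

lemma ff_inj {P Q : STerm A} (hP : FF P) (hQ : FF Q) (h : se P = se Q) : P = Q := by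
  induction hP generalizing Q with
  | ff =>
      cases hQ with
      | ff => rfl
      | cons a h1 h2 => rw [se_fcons _ _ _ h1.pure] at h; exact absurd h.symm (by simp)
  | cons a h1 h2 ih1 ih2 =>
      cases hQ with
      | ff => rw [se_fcons _ _ _ h1.pure] at h; exact absurd h (by simp)
      | cons b g1 g2 =>
          rw [se_fcons _ _ _ h1.pure, se_fcons _ _ _ g1.pure] at h
          simp only [ETree.node.injEq] at h
          rw [ih1 g1 h.2.2, ih2 g2 h.1, h.2.1]

lemma lit_inj {P Q : STerm A} (hP : Lit P) (hQ : Lit Q) (h : se P = se Q) : P = Q := by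
  cases hP with
  | pos a h1 h2 =>
      cases hQ with
      | pos b g1 g2 =>
          rw [se_tcons _ _ _ h1.pure, se_tcons _ _ _ g1.pure] at h
          simp only [ETree.node.injEq] at h
          rw [tt_inj h1 g1 h.1, ff_inj h2 g2 h.2.2, h.2.1]
      | neg b g1 g2 =>
          exfalso
          rw [se_tcons _ _ _ h1.pure, se_ncons _ _ _ g1.pure g2.pure] at h
          simp only [ETree.node.injEq] at h
          exact not_pureT_pureF h1.pure (h.1 ▸ g2.pure)
  | neg a h1 h2 =>
      cases hQ with
      | pos b g1 g2 =>
          exfalso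
          rw [se_ncons _ _ _ h1.pure h2.pure, se_tcons _ _ _ g1.pure] at h
          simp only [ETree.node.injEq] at h
          exact not_pureT_pureF g1.pure (h.1.symm ▸ h2.pure)
      | neg b g1 g2 =>
          rw [se_ncons _ _ _ h1.pure h2.pure, se_ncons _ _ _ g1.pure g2.pure] at h
          simp only [ETree.node.injEq] at h
          rw [tt_inj h1 g1 h.2.2, ff_inj h2 g2 h.1, h.2.1]

/-! ### surjectivity of se onto tree classes -/

lemma surjT {X : ETree A} (h : pureT X) : ∃ P, TT P ∧ se P = X := by
  induction X with
  | leafT => exact ⟨.tt, .tt, rfl⟩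
  | leafF => exact absurd (by simp) h
  | node l a r ihl ihr =>
      rw [pureT_node_iff] at h
      obtain ⟨P, hP, rfl⟩ := ihl h.1
      obtain ⟨Q, hQ, rfl⟩ := ihr h.2
      exact ⟨_, .cons a hP hQ, se_tcons a P Q h.1⟩

lemma surjF {X : ETree A} (h : pureF X) : ∃ P, FF P ∧ se P = X := by
  induction X with
  | leafF => exact ⟨.ff, .ff, rfl⟩
  | leafT => exact absurd (by simp) h
  | node l a r ihl ihr =>
      rw [pureF_node_iff] at h
      obtain ⟨P, hP, rfl⟩ := ihr h.2
      obtain ⟨Q, hQ, rfl⟩ := ihl h.1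
      exact ⟨_, .cons a hP hQ, se_fcons a P Q h.2⟩

lemma surjL {X : ETree A} (h : LTree X) : ∃ P, Lit P ∧ se P = X := by
  cases h with
  | @mkT S U a hS hU =>
      obtain ⟨P, hP, rfl⟩ := surjT hS
      obtain ⟨G, hG, rfl⟩ := surjF hU
      exact ⟨_, .pos a hP hG, se_tcons a P G hP.pure⟩
  | @mkF S U a hU hS =>
      obtain ⟨P, hP, rfl⟩ := surjT hS
      obtain ⟨G, hG, rfl⟩ := surjF hU
      exact ⟨_, .neg a hP hG, se_ncons a P G hP.pure hG.pure⟩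

lemma surjS {X : ETree A} (h : StarT X) : ∃ P, Star P ∧ se P = X := by
  induction h with
  | lit hL =>
      obtain ⟨P, hP, h⟩ := surjL hL
      exact ⟨P, .lit hP, h⟩
  | land h1 h2 ih1 ih2 =>
      obtain ⟨P, hP, rfl⟩ := ih1
      obtain ⟨Q, hQ, rfl⟩ := ih2
      exact ⟨.and P Q, .sand hP hQ, rfl⟩
  | lor h1 h2 ih1 ih2 =>
      obtain ⟨P, hP, rfl⟩ := ih1
      obtain ⟨Q, hQ, rfl⟩ := ih2
      exact ⟨.or P Q, .sor hP hQ, rfl⟩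

end FSCL

namespace FSCL

variable {A : Type}

local infixl:65 " ⋀ " => STerm.and
local infixl:60 " ⋁ " => STerm.or
local prefix:100 "∼" => STerm.neg
local infix:45 " ≃ " => EqFSCL

instance : Trans (@EqFSCL A) (@EqFSCL A) (@EqFSCL A) := ⟨EqFSCL.trans⟩

namespace Eqd

open EqFSCL

-- basic derived laws
lemma notT : (∼.tt : STerm A) ≃ .ff := F1.symm

lemma notF : (∼.ff : STerm A) ≃ .tt := (neg_congr F1).trans (F3 .tt)

lemma dm_and (x y : STerm A) : ∼(x ⋀ y) ≃ (∼x ⋁ ∼y) :=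
  ((F2 (∼x) (∼y)).trans (neg_congr (and_congr (F3 x) (F3 y)))).symm

lemma dm_or (x y : STerm A) : ∼(x ⋁ y) ≃ (∼x ⋀ ∼y) :=
  (neg_congr (F2 x y)).trans (F3 _)

lemma dm_and' (x y : STerm A) : (x ⋀ y) ≃ ∼(∼x ⋁ ∼y) :=
  ((dm_or (∼x) (∼y)).trans (and_congr (F3 x) (F3 y))).symm

lemma Tor (x : STerm A) : (.tt ⋁ x) ≃ .tt :=
  calc (.tt ⋁ x) ≃ ∼(∼.tt ⋀ ∼x) := F2 _ _
    _ ≃ ∼(.ff ⋀ ∼x) := neg_congr (and_congr notT (refl _))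
    _ ≃ ∼.ff := neg_congr (F6 _)
    _ ≃ .tt := notF

lemma For (x : STerm A) : (.ff ⋁ x) ≃ x :=
  calc (.ff ⋁ x) ≃ ∼(∼.ff ⋀ ∼x) := F2 _ _
    _ ≃ ∼(.tt ⋀ ∼x) := neg_congr (and_congr notF (refl _))
    _ ≃ ∼∼x := neg_congr (F4 _)
    _ ≃ x := F3 x

lemma andT (x : STerm A) : (x ⋀ .tt) ≃ x :=
  calc (x ⋀ .tt) ≃ ∼(∼x ⋁ ∼.tt) := dm_and' _ _
    _ ≃ ∼(∼x ⋁ .ff) := neg_congr (or_congr (refl _) notT)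
    _ ≃ ∼∼x := neg_congr (F5 _)
    _ ≃ x := F3 x

lemma or_assoc (x y z : STerm A) : ((x ⋁ y) ⋁ z) ≃ (x ⋁ (y ⋁ z)) :=
  calc ((x ⋁ y) ⋁ z) ≃ ∼(∼(x ⋁ y) ⋀ ∼z) := F2 _ _
    _ ≃ ∼((∼x ⋀ ∼y) ⋀ ∼z) := neg_congr (and_congr (dm_or _ _) (refl _))
    _ ≃ ∼(∼x ⋀ (∼y ⋀ ∼z)) := neg_congr (F7 _ _ _)
    _ ≃ ∼(∼x ⋀ ∼(y ⋁ z)) := neg_congr (and_congr (refl _) (dm_or _ _).symm)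
    _ ≃ (x ⋁ (y ⋁ z)) := (F2 _ _).symm

lemma aF_and (x y : STerm A) : ((x ⋀ .ff) ⋀ y) ≃ (x ⋀ .ff) :=
  (F7 _ _ _).trans (and_congr (refl _) (F6 _))

lemma orT_eq (x : STerm A) : (x ⋁ .tt) ≃ ∼(x ⋀ .ff) :=
  calc (x ⋁ .tt) ≃ ∼(∼x ⋀ ∼.tt) := F2 _ _
    _ ≃ ∼(∼x ⋀ .ff) := neg_congr (and_congr (refl _) notT)
    _ ≃ ∼(x ⋀ .ff) := neg_congr (F8 x)

lemma notaF (x : STerm A) : ∼(x ⋀ .ff) ≃ (x ⋁ .tt) := (orT_eq x).symm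

lemma notoT (x : STerm A) : ∼(x ⋁ .tt) ≃ (x ⋀ .ff) :=
  calc ∼(x ⋁ .tt) ≃ (∼x ⋀ ∼.tt) := dm_or _ _
    _ ≃ (∼x ⋀ .ff) := and_congr (refl _) notT
    _ ≃ (x ⋀ .ff) := F8 x

lemma F8' (x : STerm A) : (∼x ⋁ .tt) ≃ (x ⋁ .tt) :=
  calc (∼x ⋁ .tt) ≃ ∼(∼x ⋀ .ff) := orT_eq _
    _ ≃ ∼(x ⋀ .ff) := neg_congr (F8 x)
    _ ≃ (x ⋁ .tt) := notaF x

lemma oT_or (x y : STerm A) : ((x ⋁ .tt) ⋁ y) ≃ (x ⋁ .tt) :=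
  (or_assoc _ _ _).trans (or_congr (refl _) (Tor y))

lemma F10' (x y z : STerm A) :
    ((x ⋁ y) ⋀ (z ⋁ .tt)) ≃ ((x ⋀ (z ⋁ .tt)) ⋁ (y ⋀ (z ⋁ .tt))) :=
  calc ((x ⋁ y) ⋀ (z ⋁ .tt))
      ≃ ∼(∼(x ⋁ y) ⋁ ∼(z ⋁ .tt)) := dm_and' _ _
    _ ≃ ∼((∼x ⋀ ∼y) ⋁ (z ⋀ .ff)) := neg_congr (or_congr (dm_or _ _) (notoT z))
    _ ≃ ∼((∼x ⋁ (z ⋀ .ff)) ⋀ (∼y ⋁ (z ⋀ .ff))) := neg_congr (F10 _ _ _)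
    _ ≃ (∼(∼x ⋁ (z ⋀ .ff)) ⋁ ∼(∼y ⋁ (z ⋀ .ff))) := dm_and _ _
    _ ≃ ((∼∼x ⋀ ∼(z ⋀ .ff)) ⋁ (∼∼y ⋀ ∼(z ⋀ .ff))) := or_congr (dm_or _ _) (dm_or _ _)
    _ ≃ ((x ⋀ (z ⋁ .tt)) ⋁ (y ⋀ (z ⋁ .tt))) :=
        or_congr (and_congr (F3 x) (notaF z)) (and_congr (F3 y) (notaF z))

lemma D8 (x y : STerm A) : ((x ⋁ y) ⋀ .ff) ≃ ((∼x ⋀ y) ⋀ .ff) :=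
  calc ((x ⋁ y) ⋀ .ff) ≃ (∼(∼x ⋀ ∼y) ⋀ .ff) := and_congr (F2 _ _) (refl _)
    _ ≃ ((∼x ⋀ ∼y) ⋀ .ff) := F8 _
    _ ≃ (∼x ⋀ (∼y ⋀ .ff)) := F7 _ _ _
    _ ≃ (∼x ⋀ (y ⋀ .ff)) := and_congr (refl _) (F8 y)
    _ ≃ ((∼x ⋀ y) ⋀ .ff) := (F7 _ _ _).symm

lemma D8' (x y : STerm A) : ((∼x ⋁ y) ⋀ .ff) ≃ ((x ⋀ y) ⋀ .ff) :=
  (D8 (∼x) y).trans (and_congr (and_congr (F3 x) (refl _)) (refl _))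

lemma sub (x y : STerm A) : ((x ⋁ y) ⋀ .ff) ≃ ((x ⋁ (y ⋀ .ff)) ⋀ .ff) :=
  calc ((x ⋁ y) ⋀ .ff) ≃ ((∼x ⋀ y) ⋀ .ff) := D8 _ _
    _ ≃ (∼x ⋀ (y ⋀ .ff)) := F7 _ _ _
    _ ≃ (∼x ⋀ ((y ⋀ .ff) ⋀ .ff)) := and_congr (refl _) (aF_and y .ff).symm
    _ ≃ ((∼x ⋀ (y ⋀ .ff)) ⋀ .ff) := (F7 _ _ _).symm
    _ ≃ ((x ⋁ (y ⋀ .ff)) ⋀ .ff) := (D8 x (y ⋀ .ff)).symm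

lemma key1' (x V z : STerm A) :
    ((∼x ⋁ V) ⋀ (z ⋀ .ff)) ≃ ((x ⋁ (z ⋀ .ff)) ⋀ (V ⋀ (z ⋀ .ff))) :=
  calc ((∼x ⋁ V) ⋀ (z ⋀ .ff))
      ≃ (∼(x ⋀ ∼V) ⋀ (z ⋀ .ff)) := by
        refine and_congr ?_ (refl _)
        calc (∼x ⋁ V) ≃ ∼(∼∼x ⋀ ∼V) := F2 _ _
          _ ≃ ∼(x ⋀ ∼V) := neg_congr (and_congr (F3 x) (refl _))
    _ ≃ ((∼(x ⋀ ∼V) ⋀ z) ⋀ .ff) := (F7 _ _ _).symm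
    _ ≃ (((x ⋀ ∼V) ⋁ z) ⋀ .ff) := (D8 _ _).symm
    _ ≃ (((x ⋀ ∼V) ⋁ (z ⋀ .ff)) ⋀ .ff) := sub _ _
    _ ≃ (((x ⋁ (z ⋀ .ff)) ⋀ (∼V ⋁ (z ⋀ .ff))) ⋀ .ff) := and_congr (F10 _ _ _) (refl _)
    _ ≃ ((x ⋁ (z ⋀ .ff)) ⋀ ((∼V ⋁ (z ⋀ .ff)) ⋀ .ff)) := F7 _ _ _
    _ ≃ ((x ⋁ (z ⋀ .ff)) ⋀ ((V ⋀ (z ⋀ .ff)) ⋀ .ff)) := and_congr (refl _) (D8' _ _)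
    _ ≃ ((x ⋁ (z ⋀ .ff)) ⋀ (V ⋀ ((z ⋀ .ff) ⋀ .ff))) := and_congr (refl _) (F7 _ _ _)
    _ ≃ ((x ⋁ (z ⋀ .ff)) ⋀ (V ⋀ (z ⋀ .ff))) :=
        and_congr (refl _) (and_congr (refl _) (aF_and z .ff))

lemma key1'' (x V z : STerm A) :
    ((x ⋁ V) ⋀ (z ⋀ .ff)) ≃ ((∼x ⋁ (z ⋀ .ff)) ⋀ (V ⋀ (z ⋀ .ff))) :=
  calc ((x ⋁ V) ⋀ (z ⋀ .ff)) ≃ ((∼∼x ⋁ V) ⋀ (z ⋀ .ff)) :=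
        and_congr (or_congr (F3 x).symm (refl _)) (refl _)
    _ ≃ ((∼x ⋁ (z ⋀ .ff)) ⋀ (V ⋀ (z ⋀ .ff))) := key1' (∼x) V z

lemma absorb (x Y z : STerm A) :
    ((x ⋁ Y) ⋀ (z ⋀ .ff)) ≃ ((x ⋁ (Y ⋀ (z ⋀ .ff))) ⋀ (z ⋀ .ff)) := by
  have h1 := key1'' x Y z
  have h2 := key1'' x (Y ⋀ (z ⋀ .ff)) z
  have h3 : ((Y ⋀ (z ⋀ .ff)) ⋀ (z ⋀ .ff)) ≃ (Y ⋀ (z ⋀ .ff)) :=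
    calc ((Y ⋀ (z ⋀ .ff)) ⋀ (z ⋀ .ff)) ≃ (Y ⋀ ((z ⋀ .ff) ⋀ (z ⋀ .ff))) := F7 _ _ _
      _ ≃ (Y ⋀ (z ⋀ .ff)) := and_congr (refl _) (aF_and z _)
  exact h1.trans ((h2.trans (and_congr (refl _) h3)).symm)

lemma key3 (x g h : STerm A) :
    ((x ⋁ (g ⋀ .ff)) ⋀ (h ⋁ .tt)) ≃ ((x ⋀ (h ⋁ .tt)) ⋁ (g ⋀ .ff)) :=
  (calc ((x ⋀ (h ⋁ .tt)) ⋁ (g ⋀ .ff))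
      ≃ ((x ⋁ (g ⋀ .ff)) ⋀ ((h ⋁ .tt) ⋁ (g ⋀ .ff))) := F10 _ _ _
    _ ≃ ((x ⋁ (g ⋀ .ff)) ⋀ (h ⋁ .tt)) := and_congr (refl _) (oT_or h _)).symm

lemma key1 (x y z : STerm A) :
    ((∼x ⋁ (y ⋀ .ff)) ⋀ (z ⋀ .ff)) ≃ ((x ⋁ (z ⋀ .ff)) ⋀ (y ⋀ .ff)) :=
  (key1' x (y ⋀ .ff) z).trans (and_congr (refl _) (aF_and y _))

lemma allg (u h : STerm A) :
    ((u ⋁ .tt) ⋀ (h ⋁ .tt)) ≃ ((u ⋀ (h ⋁ .tt)) ⋁ (h ⋁ .tt)) :=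
  (F10' u .tt h).trans (or_congr (refl _) (F4 _))

end Eqd

end FSCL

namespace FSCL

variable {A : Type}

local infixl:65 " ⋀ " => STerm.and
local infixl:60 " ⋁ " => STerm.or
local prefix:100 "∼" => STerm.neg
local infix:45 " ≃ " => EqFSCL

open EqFSCL Eqd

/-! ### dualization -/

def dualize : STerm A → STerm A
  | .atom a => .atom a
  | .tt => .ff
  | .ff => .tt
  | .neg p => .neg (dualize p)
  | .and p q => .or (dualize p) (dualize q)
  | .or p q => .and (dualize p) (dualize q)

@[simp] lemma dualize_dualize (p : STerm A) : dualize (dualize p) = p := by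
  induction p <;> simp [dualize, *]

lemma dual_der {P Q : STerm A} (h : P ≃ Q) : dualize P ≃ dualize Q := by
  induction h with
  | refl P => exact refl _
  | symm _ ih => exact ih.symm
  | trans _ _ ih1 ih2 => exact ih1.trans ih2
  | neg_congr _ ih => exact neg_congr ih
  | and_congr _ _ ih1 ih2 => exact or_congr ih1 ih2
  | or_congr _ _ ih1 ih2 => exact and_congr ih1 ih2
  | F1 => exact notF.symm
  | F2 x y => exact dm_and' _ _
  | F3 x => exact F3 _
  | F4 x => exact For _
  | F5 x => exact andT _
  | F6 x => exact Tor _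
  | F7 x y z => exact or_assoc _ _ _
  | F8 x => exact F8' _
  | F9 x y => exact (F9 _ _).symm
  | F10 x y z => exact F10' _ _ _

lemma TT.dual {P : STerm A} (h : TT P) : FF (dualize P) := by
  induction h with
  | tt => exact .ff
  | cons a h1 h2 ih1 ih2 => exact .cons a ih1 ih2

lemma FF.dual {P : STerm A} (h : FF P) : TT (dualize P) := by
  induction h with
  | ff => exact .tt
  | cons a h1 h2 ih1 ih2 => exact .cons a ih1 ih2

/-! ### representations -/

lemma rep_TT {P : STerm A} (h : TT P) : ∃ p, P ≃ (p ⋁ .tt) := by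
  induction h with
  | tt => exact ⟨.tt, (Tor .tt).symm⟩
  | cons a h1 h2 ih1 ih2 =>
      obtain ⟨q, hq⟩ := ih2
      exact ⟨(.and (.atom a) _) ⋁ q,
        (or_congr (refl _) hq).trans (or_assoc _ _ _).symm⟩

lemma rep_FF {P : STerm A} (h : FF P) : ∃ p, P ≃ (p ⋀ .ff) := by
  induction h with
  | ff => exact ⟨.tt, (F4 .ff).symm⟩
  | cons a h1 h2 ih1 ih2 =>
      obtain ⟨q, hq⟩ := ih2
      exact ⟨(.or (.atom a) _) ⋀ q,
        (and_congr (refl _) hq).trans (F7 _ _ _).symm⟩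

lemma FF.absorb {G : STerm A} (h : FF G) (y : STerm A) : (G ⋀ y) ≃ G := by
  obtain ⟨g, hg⟩ := rep_FF h
  calc (G ⋀ y) ≃ ((g ⋀ .ff) ⋀ y) := and_congr hg (refl _)
    _ ≃ (g ⋀ .ff) := aF_and _ _
    _ ≃ G := hg.symm

lemma TT.orabsorb {H : STerm A} (h : TT H) (y : STerm A) : (H ⋁ y) ≃ H := by
  obtain ⟨p, hp⟩ := rep_TT h
  calc (H ⋁ y) ≃ ((p ⋁ .tt) ⋁ y) := or_congr hp (refl _)
    _ ≃ (p ⋁ .tt) := oT_or _ _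
    _ ≃ H := hp.symm

/-! ### LEM-A and LEM-B -/

lemma lemA : ∀ q : STerm A, ∀ {Y G G5 : STerm A}, FF G → FF G5 → ((Y ⋀ G) ≃ G5) →
    ∃ G6, FF G6 ∧ ((q ⋁ Y) ⋀ G) ≃ G6 := by
  intro q
  induction q with
  | atom a =>
      intro Y G G5 hG hG5 hYG
      obtain ⟨g, hg⟩ := rep_FF hG
      refine ⟨(.or (.atom a) G5) ⋀ G, .cons a hG5 hG, ?_⟩
      calc ((.atom a ⋁ Y) ⋀ G) ≃ ((.atom a ⋁ Y) ⋀ (g ⋀ .ff)) := and_congr (refl _) hg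
        _ ≃ ((.atom a ⋁ (Y ⋀ (g ⋀ .ff))) ⋀ (g ⋀ .ff)) := absorb _ _ _
        _ ≃ ((.atom a ⋁ (Y ⋀ G)) ⋀ G) :=
            and_congr (or_congr (refl _) (and_congr (refl _) hg.symm)) hg.symm
        _ ≃ ((.atom a ⋁ G5) ⋀ G) := and_congr (or_congr (refl _) hYG) (refl _)
  | tt =>
      intro Y G G5 hG hG5 hYG
      exact ⟨G, hG, (and_congr (Tor Y) (refl _)).trans (F4 G)⟩
  | ff =>
      intro Y G G5 hG hG5 hYG
      exact ⟨G5, hG5, (and_congr (For Y) (refl _)).trans hYG⟩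
  | neg r ih =>
      intro Y G G5 hG hG5 hYG
      obtain ⟨g, hg⟩ := rep_FF hG
      obtain ⟨G6, hG6, h6⟩ := ih (Y := G) (G := G5) (G5 := G) hG5 hG (hG.absorb G5)
      refine ⟨G6, hG6, ?_⟩
      calc ((∼r ⋁ Y) ⋀ G) ≃ ((∼r ⋁ Y) ⋀ (g ⋀ .ff)) := and_congr (refl _) hg
        _ ≃ ((r ⋁ (g ⋀ .ff)) ⋀ (Y ⋀ (g ⋀ .ff))) := key1' r Y g
        _ ≃ ((r ⋁ G) ⋀ (Y ⋀ G)) :=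
            and_congr (or_congr (refl _) hg.symm) (and_congr (refl _) hg.symm)
        _ ≃ ((r ⋁ G) ⋀ G5) := and_congr (refl _) hYG
        _ ≃ G6 := h6
  | and r s ihr ihs =>
      intro Y G G5 hG hG5 hYG
      obtain ⟨g, hg⟩ := rep_FF hG
      obtain ⟨g5, hg5⟩ := rep_FF hG5
      obtain ⟨G7, hG7, h7⟩ := ihs (Y := G5) (G := G) (G5 := G5) hG hG5 (hG5.absorb G)
      obtain ⟨G8, hG8, h8⟩ := ihr (Y := G5) (G := G7) (G5 := G5) hG7 hG5 (hG5.absorb G7)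
      refine ⟨G8, hG8, ?_⟩
      calc (((r ⋀ s) ⋁ Y) ⋀ G) ≃ (((r ⋀ s) ⋁ Y) ⋀ (g ⋀ .ff)) := and_congr (refl _) hg
        _ ≃ (((r ⋀ s) ⋁ (Y ⋀ (g ⋀ .ff))) ⋀ (g ⋀ .ff)) := absorb _ _ _
        _ ≃ (((r ⋀ s) ⋁ (Y ⋀ G)) ⋀ G) :=
            and_congr (or_congr (refl _) (and_congr (refl _) hg.symm)) hg.symm
        _ ≃ (((r ⋀ s) ⋁ G5) ⋀ G) := and_congr (or_congr (refl _) hYG) (refl _)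
        _ ≃ (((r ⋀ s) ⋁ (g5 ⋀ .ff)) ⋀ G) := and_congr (or_congr (refl _) hg5) (refl _)
        _ ≃ (((r ⋁ (g5 ⋀ .ff)) ⋀ (s ⋁ (g5 ⋀ .ff))) ⋀ G) := and_congr (F10 _ _ _) (refl _)
        _ ≃ (((r ⋁ G5) ⋀ (s ⋁ G5)) ⋀ G) :=
            and_congr (and_congr (or_congr (refl _) hg5.symm)
              (or_congr (refl _) hg5.symm)) (refl _)
        _ ≃ ((r ⋁ G5) ⋀ ((s ⋁ G5) ⋀ G)) := F7 _ _ _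
        _ ≃ ((r ⋁ G5) ⋀ G7) := and_congr (refl _) h7
        _ ≃ G8 := h8
  | or r s ihr ihs =>
      intro Y G G5 hG hG5 hYG
      obtain ⟨G7, hG7, h7⟩ := ihs (Y := Y) (G := G) (G5 := G5) hG hG5 hYG
      obtain ⟨G8, hG8, h8⟩ := ihr (Y := s ⋁ Y) (G := G) (G5 := G7) hG hG7 h7
      refine ⟨G8, hG8, ?_⟩
      calc (((r ⋁ s) ⋁ Y) ⋀ G) ≃ ((r ⋁ (s ⋁ Y)) ⋀ G) := and_congr (or_assoc _ _ _) (refl _)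
        _ ≃ G8 := h8

end FSCL

namespace FSCL

variable {A : Type}

local infixl:65 " ⋀ " => STerm.and
local infixl:60 " ⋁ " => STerm.or
local prefix:100 "∼" => STerm.neg
local infix:45 " ≃ " => EqFSCL

open EqFSCL Eqd

lemma lemB : ∀ q : STerm A, ∀ {G : STerm A}, FF G → ∃ G', FF G' ∧ (q ⋀ G) ≃ G' := by
  intro q
  induction q with
  | atom a =>
      intro G hG
      exact ⟨(.or (.atom a) .ff) ⋀ G, .cons a .ff hG,
        and_congr (F5 (.atom a)).symm (refl _)⟩
  | tt => intro G hG; exact ⟨G, hG, F4 G⟩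
  | ff => intro G hG; exact ⟨.ff, .ff, F6 G⟩
  | neg r ih =>
      intro G hG
      obtain ⟨g, hg⟩ := rep_FF hG
      obtain ⟨G6, hG6, h6⟩ := lemA r (Y := G) (G := .ff) (G5 := G) .ff hG (hG.absorb .ff)
      refine ⟨G6, hG6, ?_⟩
      calc (∼r ⋀ G) ≃ (∼r ⋀ (g ⋀ .ff)) := and_congr (refl _) hg
        _ ≃ ((∼r ⋀ g) ⋀ .ff) := (F7 _ _ _).symm
        _ ≃ ((r ⋁ g) ⋀ .ff) := (D8 r g).symm
        _ ≃ ((r ⋁ (g ⋀ .ff)) ⋀ .ff) := sub r g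
        _ ≃ ((r ⋁ G) ⋀ .ff) := and_congr (or_congr (refl _) hg.symm) (refl _)
        _ ≃ G6 := h6
  | and r s ihr ihs =>
      intro G hG
      obtain ⟨G1, hG1, h1⟩ := ihs hG
      obtain ⟨G2, hG2, h2⟩ := ihr hG1
      exact ⟨G2, hG2, (F7 _ _ _).trans ((and_congr (refl _) h1).trans h2)⟩
  | or r s ihr ihs =>
      intro G hG
      obtain ⟨G5, hG5, h5⟩ := ihs hG
      obtain ⟨G6, hG6, h6⟩ := lemA r (Y := s) (G := G) (G5 := G5) hG hG5 h5
      exact ⟨G6, hG6, h6⟩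

lemma lemB' (q : STerm A) {H : STerm A} (hH : TT H) :
    ∃ H', TT H' ∧ (q ⋁ H) ≃ H' := by
  obtain ⟨G', hG', h⟩ := lemB (dualize q) (G := dualize H) hH.dual
  refine ⟨dualize G', hG'.dual, ?_⟩
  have := dual_der h
  simpa [dualize] using this

/-! ### conjunction normalizations -/

lemma tt_and {P Q : STerm A} (hP : TT P) (hQ : TT Q) :
    ∃ R, TT R ∧ (P ⋀ Q) ≃ R := by
  induction hP with
  | tt => exact ⟨Q, hQ, F4 Q⟩
  | cons a h1 h2 ih1 ih2 =>
      obtain ⟨R1, hR1, e1⟩ := ih1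
      obtain ⟨R2, hR2, e2⟩ := ih2
      obtain ⟨q, hq⟩ := rep_TT hQ
      refine ⟨(.and (.atom a) R1) ⋁ R2, .cons a hR1 hR2, ?_⟩
      calc (((.atom a ⋀ _) ⋁ _) ⋀ Q) ≃ ((( .atom a ⋀ _) ⋁ _) ⋀ (q ⋁ .tt)) :=
            and_congr (refl _) hq
        _ ≃ (((.atom a ⋀ _) ⋀ (q ⋁ .tt)) ⋁ (_ ⋀ (q ⋁ .tt))) := F10' _ _ _
        _ ≃ (((.atom a ⋀ _) ⋀ Q) ⋁ (_ ⋀ Q)) :=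
            or_congr (and_congr (refl _) hq.symm) (and_congr (refl _) hq.symm)
        _ ≃ ((.atom a ⋀ (_ ⋀ Q)) ⋁ (_ ⋀ Q)) := or_congr (F7 _ _ _) (refl _)
        _ ≃ ((.atom a ⋀ R1) ⋁ R2) := or_congr (and_congr (refl _) e1) e2

lemma star_tt {s : STerm A} (hs : Star s) {Q : STerm A} (hQ : TT Q) :
    ∃ s', Star s' ∧ (s ⋀ Q) ≃ s' := by
  induction hs with
  | lit hL =>
      cases hL with
      | pos a hP hG =>
          obtain ⟨R1, hR1, e1⟩ := tt_and hP hQ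
          obtain ⟨q, hq⟩ := rep_TT hQ
          refine ⟨(.and (.atom a) R1) ⋁ _, .lit (.pos a hR1 hG), ?_⟩
          calc (((.atom a ⋀ _) ⋁ _) ⋀ Q) ≃ (((.atom a ⋀ _) ⋁ _) ⋀ (q ⋁ .tt)) :=
                and_congr (refl _) hq
            _ ≃ (((.atom a ⋀ _) ⋀ (q ⋁ .tt)) ⋁ (_ ⋀ (q ⋁ .tt))) := F10' _ _ _
            _ ≃ (((.atom a ⋀ _) ⋀ Q) ⋁ (_ ⋀ Q)) :=
                or_congr (and_congr (refl _) hq.symm) (and_congr (refl _) hq.symm)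
            _ ≃ ((.atom a ⋀ (_ ⋀ Q)) ⋁ _) := or_congr (F7 _ _ _) (FF.absorb hG Q)
            _ ≃ ((.atom a ⋀ R1) ⋁ _) := or_congr (and_congr (refl _) e1) (refl _)
      | neg a hP hG =>
          obtain ⟨R1, hR1, e1⟩ := tt_and hP hQ
          obtain ⟨q, hq⟩ := rep_TT hQ
          refine ⟨(.and (∼(.atom a)) R1) ⋁ _, .lit (.neg a hR1 hG), ?_⟩
          calc (((∼(.atom a) ⋀ _) ⋁ _) ⋀ Q) ≃ (((∼(.atom a) ⋀ _) ⋁ _) ⋀ (q ⋁ .tt)) :=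
                and_congr (refl _) hq
            _ ≃ (((∼(.atom a) ⋀ _) ⋀ (q ⋁ .tt)) ⋁ (_ ⋀ (q ⋁ .tt))) := F10' _ _ _
            _ ≃ (((∼(.atom a) ⋀ _) ⋀ Q) ⋁ (_ ⋀ Q)) :=
                or_congr (and_congr (refl _) hq.symm) (and_congr (refl _) hq.symm)
            _ ≃ ((∼(.atom a) ⋀ (_ ⋀ Q)) ⋁ _) := or_congr (F7 _ _ _) (FF.absorb hG Q)
            _ ≃ ((∼(.atom a) ⋀ R1) ⋁ _) := or_congr (and_congr (refl _) e1) (refl _)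
  | sand h1 h2 ih1 ih2 =>
      obtain ⟨s2', hs2', e2⟩ := ih2
      exact ⟨_ ⋀ s2', .sand h1 hs2', (F7 _ _ _).trans (and_congr (refl _) e2)⟩
  | sor h1 h2 ih1 ih2 =>
      obtain ⟨s1', hs1', e1⟩ := ih1
      obtain ⟨s2', hs2', e2⟩ := ih2
      obtain ⟨q, hq⟩ := rep_TT hQ
      refine ⟨s1' ⋁ s2', .sor hs1' hs2', ?_⟩
      calc ((_ ⋁ _) ⋀ Q) ≃ ((_ ⋁ _) ⋀ (q ⋁ .tt)) := and_congr (refl _) hq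
        _ ≃ ((_ ⋀ (q ⋁ .tt)) ⋁ (_ ⋀ (q ⋁ .tt))) := F10' _ _ _
        _ ≃ ((_ ⋀ Q) ⋁ (_ ⋀ Q)) :=
            or_congr (and_congr (refl _) hq.symm) (and_congr (refl _) hq.symm)
        _ ≃ (s1' ⋁ s2') := or_congr e1 e2

/-! ### negation normalizations -/

lemma notTT {P : STerm A} (hP : TT P) : ∃ G, FF G ∧ (∼P) ≃ G := by
  induction hP with
  | tt => exact ⟨.ff, .ff, F1.symm⟩
  | cons a h1 h2 ih1 ih2 =>
      obtain ⟨G1, hG1, e1⟩ := ih1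
      obtain ⟨G2, hG2, e2⟩ := ih2
      obtain ⟨g1, hg1⟩ := rep_FF hG1
      obtain ⟨g2, hg2⟩ := rep_FF hG2
      refine ⟨(.or (.atom a) G2) ⋀ G1, .cons a hG2 hG1, ?_⟩
      calc (∼((.atom a ⋀ _) ⋁ _)) ≃ (∼(.atom a ⋀ _) ⋀ ∼_) := dm_or _ _
        _ ≃ ((∼(.atom a) ⋁ ∼_) ⋀ ∼_) := and_congr (dm_and _ _) (refl _)
        _ ≃ ((∼(.atom a) ⋁ G1) ⋀ G2) := and_congr (or_congr (refl _) e1) e2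
        _ ≃ ((∼(.atom a) ⋁ (g1 ⋀ .ff)) ⋀ (g2 ⋀ .ff)) :=
            and_congr (or_congr (refl _) hg1) hg2
        _ ≃ ((.atom a ⋁ (g2 ⋀ .ff)) ⋀ (g1 ⋀ .ff)) := key1 _ _ _
        _ ≃ ((.atom a ⋁ G2) ⋀ G1) := and_congr (or_congr (refl _) hg2.symm) hg1.symm

lemma notFF {G : STerm A} (hG : FF G) : ∃ H, TT H ∧ (∼G) ≃ H := by
  obtain ⟨G', hG', h⟩ := notTT hG.dual
  refine ⟨dualize G', hG'.dual, ?_⟩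
  have := dual_der h
  simpa [dualize] using this

lemma notLit {L : STerm A} (hL : Lit L) : ∃ L', Lit L' ∧ (∼L) ≃ L' := by
  cases hL with
  | pos a hP hG =>
      obtain ⟨Gs, hGs, e1⟩ := notTT hP
      obtain ⟨Hs, hHs, e2⟩ := notFF hG
      obtain ⟨g, hg⟩ := rep_FF hGs
      obtain ⟨h, hh⟩ := rep_TT hHs
      refine ⟨(.and (∼(.atom a)) Hs) ⋁ Gs, .neg a hHs hGs, ?_⟩
      calc (∼((.atom a ⋀ _) ⋁ _)) ≃ (∼(.atom a ⋀ _) ⋀ ∼_) := dm_or _ _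
        _ ≃ ((∼(.atom a) ⋁ ∼_) ⋀ ∼_) := and_congr (dm_and _ _) (refl _)
        _ ≃ ((∼(.atom a) ⋁ Gs) ⋀ Hs) := and_congr (or_congr (refl _) e1) e2
        _ ≃ ((∼(.atom a) ⋁ (g ⋀ .ff)) ⋀ (h ⋁ .tt)) := and_congr (or_congr (refl _) hg) hh
        _ ≃ ((∼(.atom a) ⋀ (h ⋁ .tt)) ⋁ (g ⋀ .ff)) := key3 _ g h
        _ ≃ ((∼(.atom a) ⋀ Hs) ⋁ Gs) := or_congr (and_congr (refl _) hh.symm) hg.symm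
  | neg a hP hG =>
      obtain ⟨Gs, hGs, e1⟩ := notTT hP
      obtain ⟨Hs, hHs, e2⟩ := notFF hG
      obtain ⟨g, hg⟩ := rep_FF hGs
      obtain ⟨h, hh⟩ := rep_TT hHs
      refine ⟨(.and (.atom a) Hs) ⋁ Gs, .pos a hHs hGs, ?_⟩
      calc (∼((∼(.atom a) ⋀ _) ⋁ _)) ≃ (∼(∼(.atom a) ⋀ _) ⋀ ∼_) := dm_or _ _
        _ ≃ ((∼∼(.atom a) ⋁ ∼_) ⋀ ∼_) := and_congr (dm_and _ _) (refl _)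
        _ ≃ ((.atom a ⋁ Gs) ⋀ Hs) := and_congr (or_congr (F3 _) e1) e2
        _ ≃ ((.atom a ⋁ (g ⋀ .ff)) ⋀ (h ⋁ .tt)) := and_congr (or_congr (refl _) hg) hh
        _ ≃ ((.atom a ⋀ (h ⋁ .tt)) ⋁ (g ⋀ .ff)) := key3 _ g h
        _ ≃ ((.atom a ⋀ Hs) ⋁ Gs) := or_congr (and_congr (refl _) hh.symm) hg.symm

lemma notStar {s : STerm A} (hs : Star s) : ∃ s', Star s' ∧ (∼s) ≃ s' := by
  induction hs with
  | lit hL =>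
      obtain ⟨L', hL', e⟩ := notLit hL
      exact ⟨L', .lit hL', e⟩
  | sand h1 h2 ih1 ih2 =>
      obtain ⟨s1', hs1', e1⟩ := ih1
      obtain ⟨s2', hs2', e2⟩ := ih2
      exact ⟨s1' ⋁ s2', .sor hs1' hs2', (dm_and _ _).trans (or_congr e1 e2)⟩
  | sor h1 h2 ih1 ih2 =>
      obtain ⟨s1', hs1', e1⟩ := ih1
      obtain ⟨s2', hs2', e2⟩ := ih2
      exact ⟨s1' ⋀ s2', .sand hs1' hs2', (dm_or _ _).trans (and_congr e1 e2)⟩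

lemma not_snf {N : STerm A} (hN : SNF N) : ∃ N', SNF N' ∧ (∼N) ≃ N' := by
  cases hN with
  | isTT h =>
      obtain ⟨G, hG, e⟩ := notTT h
      exact ⟨G, .isFF hG, e⟩
  | isFF h =>
      obtain ⟨H, hH, e⟩ := notFF h
      exact ⟨H, .isTT hH, e⟩
  | @mix Pt Ps hPt hPs =>
      obtain ⟨p, hp⟩ := rep_TT hPt
      obtain ⟨s', hs', e⟩ := notStar hPs
      refine ⟨Pt ⋀ s', .mix hPt hs', ?_⟩
      calc (∼(Pt ⋀ Ps)) ≃ (∼((p ⋁ .tt) ⋀ Ps)) := neg_congr (and_congr hp (refl _))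
        _ ≃ (∼((p ⋀ .ff) ⋁ Ps)) := neg_congr (F9 p Ps).symm
        _ ≃ (∼(p ⋀ .ff) ⋀ ∼Ps) := dm_or _ _
        _ ≃ ((p ⋁ .tt) ⋀ ∼Ps) := and_congr (notaF p) (refl _)
        _ ≃ (Pt ⋀ s') := and_congr hp.symm e

lemma and_snf {N1 N2 : STerm A} (h1 : SNF N1) (h2 : SNF N2) :
    ∃ N, SNF N ∧ (N1 ⋀ N2) ≃ N := by
  cases h1 with
  | isTT hP =>
      cases h2 with
      | isTT hQ =>
          obtain ⟨R, hR, e⟩ := tt_and hP hQ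
          exact ⟨R, .isTT hR, e⟩
      | isFF hG =>
          obtain ⟨p, hp⟩ := rep_TT hP
          obtain ⟨G6, hG6, e⟩ := lemA p (Y := .tt) (G := N2) (G5 := N2) hG hG (F4 N2)
          exact ⟨G6, .isFF hG6, (and_congr hp (refl _)).trans e⟩
      | @mix Qt Qs hQt hQs =>
          obtain ⟨R, hR, e⟩ := tt_and hP hQt
          exact ⟨R ⋀ Qs, .mix hR hQs,
            (F7 _ _ _).symm.trans (and_congr e (refl _))⟩
  | isFF hG => exact ⟨N1, .isFF hG, hG.absorb N2⟩
  | @mix Pt Ps hPt hPs =>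
      cases h2 with
      | isTT hQ =>
          obtain ⟨s', hs', e⟩ := star_tt hPs hQ
          exact ⟨Pt ⋀ s', .mix hPt hs', (F7 _ _ _).trans (and_congr (refl _) e)⟩
      | isFF hG =>
          obtain ⟨G9, hG9, e9⟩ := lemB Ps hG
          obtain ⟨p, hp⟩ := rep_TT hPt
          obtain ⟨G10, hG10, e10⟩ := lemA p (Y := .tt) (G := G9) (G5 := G9) hG9 hG9 (F4 G9)
          refine ⟨G10, .isFF hG10, ?_⟩
          calc ((Pt ⋀ Ps) ⋀ N2) ≃ (Pt ⋀ (Ps ⋀ N2)) := F7 _ _ _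
            _ ≃ (Pt ⋀ G9) := and_congr (refl _) e9
            _ ≃ ((p ⋁ .tt) ⋀ G9) := and_congr hp (refl _)
            _ ≃ G10 := e10
      | @mix Qt Qs hQt hQs =>
          obtain ⟨s3, hs3, e3⟩ := star_tt hPs hQt
          refine ⟨Pt ⋀ (s3 ⋀ Qs), .mix hPt (.sand hs3 hQs), ?_⟩
          calc ((Pt ⋀ Ps) ⋀ (Qt ⋀ Qs)) ≃ (Pt ⋀ (Ps ⋀ (Qt ⋀ Qs))) := F7 _ _ _
            _ ≃ (Pt ⋀ ((Ps ⋀ Qt) ⋀ Qs)) := and_congr (refl _) (F7 _ _ _).symm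
            _ ≃ (Pt ⋀ (s3 ⋀ Qs)) := and_congr (refl _) (and_congr e3 (refl _))

lemma nf_atom (a : A) :
    (STerm.atom a) ≃ (.tt ⋀ ((.and (.atom a) .tt) ⋁ .ff)) := by
  have h1 : (STerm.atom a) ≃ ((.and (.atom a) .tt) ⋁ .ff) :=
    ((F5 _).trans (andT _)).symm
  exact (F4 (.atom a)).symm.trans (and_congr (refl _) h1)

lemma nf_ex : ∀ P : STerm A, ∃ N, SNF N ∧ P ≃ N := by
  intro P
  induction P with
  | atom a =>
      exact ⟨_, .mix .tt (.lit (.pos a .tt .ff)), nf_atom a⟩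
  | tt => exact ⟨.tt, .isTT .tt, refl _⟩
  | ff => exact ⟨.ff, .isFF .ff, refl _⟩
  | neg P ih =>
      obtain ⟨N, hN, e⟩ := ih
      obtain ⟨N', hN', e'⟩ := not_snf hN
      exact ⟨N', hN', (neg_congr e).trans e'⟩
  | and P Q ihP ihQ =>
      obtain ⟨N1, hN1, e1⟩ := ihP
      obtain ⟨N2, hN2, e2⟩ := ihQ
      obtain ⟨N, hN, e⟩ := and_snf hN1 hN2
      exact ⟨N, hN, (and_congr e1 e2).trans e⟩
  | or P Q ihP ihQ =>
      obtain ⟨N1, hN1, e1⟩ := ihP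
      obtain ⟨N2, hN2, e2⟩ := ihQ
      obtain ⟨M1, hM1, f1⟩ := not_snf hN1
      obtain ⟨M2, hM2, f2⟩ := not_snf hN2
      obtain ⟨M, hM, f⟩ := and_snf hM1 hM2
      obtain ⟨M', hM', f'⟩ := not_snf hM
      refine ⟨M', hM', ?_⟩
      calc (P ⋁ Q) ≃ (∼(∼P ⋀ ∼Q)) := F2 _ _
        _ ≃ (∼(M1 ⋀ M2)) := neg_congr (and_congr
              ((neg_congr e1).trans f1) ((neg_congr e2).trans f2))
        _ ≃ (∼M) := neg_congr f
        _ ≃ M' := f'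

end FSCL

namespace FSCL

variable {A : Type}

open ETree EqFSCL Eqd

local infix:45 " ≃ " => EqFSCL

lemma lit_vs_and {X W Y : ETree A} (hX : StarT X) (hW : StarT W) (hY : Y = tg X W)
    (hL : LTree Y) : False := by
  obtain ⟨c1, b, c2, rfl⟩ := hX.isNode
  have hm := hX.mx
  subst hY
  rw [tg_node] at hL
  cases hL with
  | mkT a hS hU =>
      rcases hm.1 with hh | hh
      · exact hS (mx_tg hh hW.mx).2
      · exact hU (mx_tg hh hW.mx).1
  | mkF a hU hS =>
      rcases hm.1 with hh | hh
      · exact hU (mx_tg hh hW.mx).1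
      · exact hS (mx_tg hh hW.mx).2

lemma lit_vs_or {X W Y : ETree A} (hX : StarT X) (hW : StarT W) (hY : Y = fg X W)
    (hL : LTree Y) : False := by
  obtain ⟨c1, b, c2, rfl⟩ := hX.isNode
  have hm := hX.mx
  subst hY
  rw [fg_node] at hL
  cases hL with
  | mkT a hS hU =>
      rcases hm.2 with hh | hh
      · exact hS (mx_fg hh hW.mx).2
      · exact hU (mx_fg hh hW.mx).1
  | mkF a hU hS =>
      rcases hm.2 with hh | hh
      · exact hU (mx_fg hh hW.mx).1
      · exact hS (mx_fg hh hW.mx).2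

lemma star_inj : ∀ n : ℕ, ∀ P Q : STerm A, Star P → Star Q → sz (se P) ≤ n →
    se P = se Q → P ≃ Q := by
  intro n
  induction n using Nat.strong_induction_on with
  | _ n IH =>
  intro P Q hP hQ hsz h
  cases hP with
  | lit hL =>
      cases hQ with
      | lit hL' => exact (lit_inj hL hL' h) ▸ EqFSCL.refl _
      | sand h1 h2 =>
          exact (lit_vs_and h1.starT h2.starT (h.trans (se_and _ _)) hL.ltree).elim
      | sor h1 h2 =>
          exact (lit_vs_or h1.starT h2.starT (h.trans (se_or _ _)) hL.ltree).elim
  | @sand P1 P2 h1 h2 =>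
      cases hQ with
      | lit hL' =>
          exact (lit_vs_and h1.starT h2.starT (h.symm.trans (se_and _ _)) hL'.ltree).elim
      | @sor Q1 Q2 g1 g2 =>
          refine ((CS_all ((Star.sand h1 h2).starT)) h1.starT h2.starT g1.starT g2.starT
            (se_and _ _) (h.trans (se_or _ _))).elim
      | @sand Q1 Q2 g1 g2 =>
          have hX : StarT (se (.and P1 P2)) := (Star.sand h1 h2).starT
          have key := (L4_all hX) h1.starT h2.starT g1.starT g2.starT (se_and _ _)
            (h.trans (se_and _ _))
          have s1 : sz (se P1) < sz (se (.and P1 P2)) := by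
            rw [se_and]; exact sz_slot_lt_t (Or.inr h1.starT) h2.starT
          have s2 : sz (se P2) < sz (se (.and P1 P2)) := by
            rw [se_and]
            obtain ⟨l, a, r, hlr⟩ := h1.starT.isNode
            exact sz_tg_gt (hlr ▸ h1.starT.mx.1) hlr _
          have s1' : sz (se Q1) < sz (se (.and P1 P2)) := by
            rw [h, se_and]
            exact sz_slot_lt_t (Or.inr g1.starT) g2.starT
          have s2' : sz (se Q2) < sz (se (.and P1 P2)) := by
            rw [h, se_and]
            obtain ⟨l, a, r, hlr⟩ := g1.starT.isNode
            exact sz_tg_gt (hlr ▸ g1.starT.mx.1) hlr _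
          rcases key with ⟨e1, e2⟩ | ⟨M, hM, m1, m2⟩ | ⟨M, hM, m1, m2⟩
          · have r1 : P1 ≃ Q1 := IH (sz (se P1)) (by omega) P1 Q1 h1 g1 le_rfl e1
            have r2 : P2 ≃ Q2 := IH (sz (se P2)) (by omega) P2 Q2 h2 g2 le_rfl e2
            exact and_congr r1 r2
          · obtain ⟨m, hm, rfl⟩ := surjS hM
            have r1 : Q1 ≃ (.and P1 m) :=
              IH (sz (se Q1)) (by omega) Q1 (.and P1 m) g1 (.sand h1 hm) le_rfl
                (by rw [se_and]; exact m1)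
            have r2 : P2 ≃ (.and m Q2) :=
              IH (sz (se P2)) (by omega) P2 (.and m Q2) h2 (.sand hm g2) le_rfl
                (by rw [se_and]; exact m2)
            calc STerm.and P1 P2 ≃ .and P1 (.and m Q2) := and_congr (EqFSCL.refl _) r2
              _ ≃ .and (.and P1 m) Q2 := (F7 _ _ _).symm
              _ ≃ .and Q1 Q2 := and_congr r1.symm (EqFSCL.refl _)
          · obtain ⟨m, hm, rfl⟩ := surjS hM
            have r1 : P1 ≃ (.and Q1 m) :=
              IH (sz (se P1)) (by omega) P1 (.and Q1 m) h1 (.sand g1 hm) le_rfl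
                (by rw [se_and]; exact m1)
            have r2 : Q2 ≃ (.and m P2) :=
              IH (sz (se Q2)) (by omega) Q2 (.and m P2) g2 (.sand hm h2) le_rfl
                (by rw [se_and]; exact m2)
            calc STerm.and P1 P2 ≃ .and (.and Q1 m) P2 := and_congr r1 (EqFSCL.refl _)
              _ ≃ .and Q1 (.and m P2) := F7 _ _ _
              _ ≃ .and Q1 Q2 := and_congr (EqFSCL.refl _) r2.symm
  | @sor P1 P2 h1 h2 =>
      cases hQ with
      | lit hL' =>
          exact (lit_vs_or h1.starT h2.starT (h.symm.trans (se_or _ _)) hL'.ltree).elim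
      | @sand Q1 Q2 g1 g2 =>
          refine ((CS_all ((Star.sor h1 h2).starT)) g1.starT g2.starT h1.starT h2.starT
            (h.trans (se_and _ _)) (se_or _ _)).elim
      | @sor Q1 Q2 g1 g2 =>
          have hX : StarT (se (.or P1 P2)) := (Star.sor h1 h2).starT
          have key := (L5_all hX) h1.starT h2.starT g1.starT g2.starT (se_or _ _)
            (h.trans (se_or _ _))
          have s1 : sz (se P1) < sz (se (.or P1 P2)) := by
            rw [se_or]; exact sz_slot_lt_f (Or.inr h1.starT) h2.starT
          have s2 : sz (se P2) < sz (se (.or P1 P2)) := by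
            rw [se_or]
            obtain ⟨l, a, r, hlr⟩ := h1.starT.isNode
            exact sz_fg_gt (hlr ▸ h1.starT.mx.2) hlr _
          have s1' : sz (se Q1) < sz (se (.or P1 P2)) := by
            rw [h, se_or]; exact sz_slot_lt_f (Or.inr g1.starT) g2.starT
          have s2' : sz (se Q2) < sz (se (.or P1 P2)) := by
            rw [h, se_or]
            obtain ⟨l, a, r, hlr⟩ := g1.starT.isNode
            exact sz_fg_gt (hlr ▸ g1.starT.mx.2) hlr _
          rcases key with ⟨e1, e2⟩ | ⟨M, hM, m1, m2⟩ | ⟨M, hM, m1, m2⟩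
          · have r1 : P1 ≃ Q1 := IH (sz (se P1)) (by omega) P1 Q1 h1 g1 le_rfl e1
            have r2 : P2 ≃ Q2 := IH (sz (se P2)) (by omega) P2 Q2 h2 g2 le_rfl e2
            exact or_congr r1 r2
          · obtain ⟨m, hm, rfl⟩ := surjS hM
            have r1 : Q1 ≃ (.or P1 m) :=
              IH (sz (se Q1)) (by omega) Q1 (.or P1 m) g1 (.sor h1 hm) le_rfl
                (by rw [se_or]; exact m1)
            have r2 : P2 ≃ (.or m Q2) :=
              IH (sz (se P2)) (by omega) P2 (.or m Q2) h2 (.sor hm g2) le_rfl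
                (by rw [se_or]; exact m2)
            calc STerm.or P1 P2 ≃ .or P1 (.or m Q2) := or_congr (EqFSCL.refl _) r2
              _ ≃ .or (.or P1 m) Q2 := (or_assoc _ _ _).symm
              _ ≃ .or Q1 Q2 := or_congr r1.symm (EqFSCL.refl _)
          · obtain ⟨m, hm, rfl⟩ := surjS hM
            have r1 : P1 ≃ (.or Q1 m) :=
              IH (sz (se P1)) (by omega) P1 (.or Q1 m) h1 (.sor g1 hm) le_rfl
                (by rw [se_or]; exact m1)
            have r2 : Q2 ≃ (.or m P2) :=
              IH (sz (se Q2)) (by omega) Q2 (.or m P2) g2 (.sor hm h2) le_rfl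
                (by rw [se_or]; exact m2)
            calc STerm.or P1 P2 ≃ .or (.or Q1 m) P2 := or_congr r1 (EqFSCL.refl _)
              _ ≃ .or Q1 (.or m P2) := or_assoc _ _ _
              _ ≃ .or Q1 Q2 := or_congr (EqFSCL.refl _) r2.symm

lemma snf_inj {P Q : STerm A} (hP : SNF P) (hQ : SNF Q) (h : se P = se Q) : P ≃ Q := by
  cases hP with
  | isTT h1 =>
      cases hQ with
      | isTT h2 => exact (tt_inj h1 h2 h) ▸ EqFSCL.refl _
      | isFF h2 => exact (not_pureT_pureF h1.pure (h ▸ h2.pure)).elim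
      | @mix Qt Qs h2 h3 =>
          exfalso
          have hmx : mx (se (.and Qt Qs)) := by
            rw [se_and]
            exact mx_tg (pureT_hasT h2.pure) h3.starT.mx
          exact h1.pure (h ▸ hmx.2)
  | isFF h1 =>
      cases hQ with
      | isFF h2 => exact (ff_inj h1 h2 h) ▸ EqFSCL.refl _
      | isTT h2 => exact (not_pureT_pureF h2.pure (h.symm ▸ h1.pure)).elim
      | @mix Qt Qs h2 h3 =>
          exfalso
          have hmx : mx (se (.and Qt Qs)) := by
            rw [se_and]
            exact mx_tg (pureT_hasT h2.pure) h3.starT.mx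
          exact h1.pure (h ▸ hmx.1)
  | @mix Pt Ps h1 h2 =>
      have hmx : mx (se (.and Pt Ps)) := by
        rw [se_and]
        exact mx_tg (pureT_hasT h1.pure) h2.starT.mx
      cases hQ with
      | isTT h3 => exact (h3.pure (h ▸ hmx.2)).elim
      | isFF h3 => exact (h3.pure (h ▸ hmx.1)).elim
      | @mix Qt Qs h3 h4 =>
          have heq : tg (se Pt) (se Ps) = tg (se Qt) (se Qs) := by
            rw [← se_and, ← se_and, h]
          rcases pt_align h1.pure h3.pure h2.starT.mx h4.starT.mx heq with
            ⟨S3, hS3, e1, e2⟩ | ⟨S3, hS3, e1, e2⟩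
          · rcases hS3n : S3 with _ | _ | ⟨u, v, w⟩
            · rw [hS3n, tg_leafT_id] at e1
              rw [hS3n, tg_leafT] at e2
              have r1 : Pt = Qt := tt_inj h1 h3 e1.symm
              have r2 : Ps ≃ Qs := star_inj (sz (se Ps)) Ps Qs h2 h4 le_rfl e2
              exact EqFSCL.and_congr (r1 ▸ EqFSCL.refl _) r2
            · rw [hS3n] at hS3; exact absurd (by simp) hS3
            · exact ((NT_all h2.starT) hS3 ⟨_, _, _, hS3n⟩ e2).elim
          · rcases hS3n : S3 with _ | _ | ⟨u, v, w⟩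
            · rw [hS3n, tg_leafT_id] at e1
              rw [hS3n, tg_leafT] at e2
              have r1 : Pt = Qt := tt_inj h1 h3 e1
              have r2 : Ps ≃ Qs := star_inj (sz (se Ps)) Ps Qs h2 h4 le_rfl e2.symm
              exact EqFSCL.and_congr (r1 ▸ EqFSCL.refl _) r2
            · rw [hS3n] at hS3; exact absurd (by simp) hS3
            · exact ((NT_all h4.starT) hS3 ⟨_, _, _, hS3n⟩ e2).elim

theorem completeness {P Q : STerm A} (h : se P = se Q) : EqFSCL P Q := by
  obtain ⟨N1, hN1, e1⟩ := nf_ex P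
  obtain ⟨N2, hN2, e2⟩ := nf_ex Q
  have hs1 := se_sound e1
  have hs2 := se_sound e2
  have hN : se N1 = se N2 := by rw [← hs1, ← hs2, h]
  exact e1.trans ((snf_inj hN1 hN2 hN).trans e2.symm)

end FSCL

/-- Completeness of EqFSCL for closed terms: `EqFSCL ⊢ P = Q` iff `se(P) = se(Q)`. -/
theorem eqFSCL_complete {A : Type} [Nonempty A] (P Q : STerm A) :
    EqFSCL P Q ↔ se P = se Q :=
  ⟨FSCL.se_sound, FSCL.completeness⟩
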